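/- arXiv:1712.01452 — 10 statements merged into one kernel-verified Lean document; each statement's English description precedes it below -/
import Mathlib

section
/- Let k be a positive integer and f be a C^{k+1} function on the real line. Then f'(x) = (1/h)·Σ_{i=1}^k c_i·[f(x-ih) - f(x)] + O(h^k) as h → 0⁺, where c_i = ((-1)^i / i)·C(k,i). -/
open Finset Set

private lemma alt_rec (k m : ℕ) (hm : 1 ≤ m) :
    ∑ i ∈ Finset.range (k+2), (-1:ℝ)^i * ((k+1).choose i) * (i:ℝ)^m
      = -(∑ j ∈ Finset.range (m+1), (m.choose j : ℝ) *
          ∑ i ∈ Finset.range (k+1), (-1:ℝ)^i * (k.choose i) * (i:ℝ)^j)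
        + ∑ i ∈ Finset.range (k+1), (-1:ℝ)^i * (k.choose i) * (i:ℝ)^m := by
  have h0 : ∀ (n : ℕ) (g : ℕ → ℝ), g 0 = 0 →
      ∑ i ∈ Finset.range (n+1), g i = ∑ i ∈ Finset.range n, g (i+1) := by
    intro n g hg
    rw [Finset.sum_range_succ' g n, hg, add_zero]
  rw [h0 (k+1) _ (by simp [zero_pow (by omega : m ≠ 0)])]
  have hsplit : ∀ i, (-1:ℝ)^(i+1) * (((k+1).choose (i+1) : ℕ) : ℝ) * ((i+1:ℕ):ℝ)^m
      = -((-1:ℝ)^i * (k.choose i) * ((i+1:ℕ):ℝ)^m)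
        - ((-1:ℝ)^i * (k.choose (i+1)) * ((i+1:ℕ):ℝ)^m) := by
    intro i
    rw [Nat.choose_succ_succ]
    push_cast
    ring
  rw [Finset.sum_congr rfl fun i _ => hsplit i, Finset.sum_sub_distrib]
  have h2 : ∑ i ∈ Finset.range (k+1), (-1:ℝ)^i * (k.choose (i+1)) * ((i+1:ℕ):ℝ)^m
      = -∑ i ∈ Finset.range (k+1), (-1:ℝ)^i * (k.choose i) * (i:ℝ)^m := by
    have := h0 (k+1) (fun i => (-1:ℝ)^i * (k.choose i) * (i:ℝ)^m)
      (by simp [zero_pow (by omega : m ≠ 0)])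
    rw [Finset.sum_range_succ, Nat.choose_succ_self] at this
    push_cast at this ⊢
    rw [show ∑ i ∈ Finset.range (k+1), (-1:ℝ)^i * (k.choose (i+1)) * ((i:ℝ)+1)^m
        = -∑ i ∈ Finset.range (k+1), (-1:ℝ)^(i+1) * (k.choose (i+1)) * ((i:ℝ)+1)^m by
      rw [← Finset.sum_neg_distrib]; congr 1; ext i; ring]
    rw [← this]
    ring
  have h1 : ∑ i ∈ Finset.range (k+1), (-1:ℝ)^i * (k.choose i) * ((i+1:ℕ):ℝ)^m
      = ∑ j ∈ Finset.range (m+1), (m.choose j : ℝ) *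
          ∑ i ∈ Finset.range (k+1), (-1:ℝ)^i * (k.choose i) * (i:ℝ)^j := by
    push_cast
    calc ∑ i ∈ Finset.range (k+1), (-1:ℝ)^i * (k.choose i) * ((i:ℝ)+1)^m
        = ∑ i ∈ Finset.range (k+1), ∑ j ∈ Finset.range (m+1),
            (m.choose j : ℝ) * ((-1:ℝ)^i * (k.choose i) * (i:ℝ)^j) := by
          refine Finset.sum_congr rfl fun i _ => ?_
          rw [add_pow, Finset.mul_sum]
          refine Finset.sum_congr rfl fun j _ => ?_
          ring
      _ = _ := by rw [Finset.sum_comm]; simp_rw [← Finset.mul_sum]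
  rw [Finset.sum_neg_distrib, h1, h2]
  ring

private lemma alt_sum_choose_pow : ∀ (m k : ℕ), m < k →
    ∑ i ∈ Finset.range (k+1), (-1:ℝ)^i * (k.choose i) * (i:ℝ)^m = 0 := by
  intro m
  induction m using Nat.strong_induction_on with
  | _ m IH =>
    intro k hk
    rcases Nat.eq_zero_or_pos m with rfl | hm
    · have h := Int.alternating_sum_range_choose (n := k)
      rw [if_neg (by omega)] at h
      have h2 : ((∑ i ∈ Finset.range (k+1), (-1:ℤ)^i * (k.choose i) : ℤ) : ℝ) = 0 := by
        rw [h]; simp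
      push_cast at h2
      simpa using h2
    · obtain ⟨k', rfl⟩ : ∃ k', k = k' + 1 := ⟨k - 1, by omega⟩
      rw [show k' + 1 + 1 = k' + 2 from rfl, alt_rec k' m hm]
      have hz : ∀ j ∈ Finset.range (m+1), (m.choose j : ℝ) *
          ∑ i ∈ Finset.range (k'+1), (-1:ℝ)^i * (k'.choose i) * (i:ℝ)^j
          = (if j = m then 1 else 0) *
              ∑ i ∈ Finset.range (k'+1), (-1:ℝ)^i * (k'.choose i) * (i:ℝ)^m := by
        intro j hj
        rw [Finset.mem_range] at hj
        rcases eq_or_lt_of_le (Nat.lt_succ_iff.mp hj) with rfl | hjm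
        · simp
        · rw [IH j hjm k' (by omega), if_neg (by omega)]
          ring
      rw [Finset.sum_congr rfl hz]
      simp only [ite_mul, one_mul, zero_mul, Finset.sum_ite_eq' (Finset.range (m+1)) m,
        Finset.mem_range, Nat.lt_succ_self, if_true]
      ring

/-- Value of the weighted power sums appearing in the backward difference formula. -/
private lemma S_val (k : ℕ) (hk : 1 ≤ k) (c : ℕ → ℝ)
    (hc : ∀ i, c i = ((-1) ^ i / i) * (k.choose i)) (j : ℕ) (hj : j ∈ Finset.Icc 1 k) :
    ∑ i ∈ Finset.Icc 1 k, c i * (i:ℝ)^j = if j = 1 then -1 else 0 := by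
  rw [Finset.mem_Icc] at hj
  have hterm : ∀ i ∈ Finset.Icc 1 k,
      c i * (i:ℝ)^j = (-1:ℝ)^i * (k.choose i) * (i:ℝ)^(j-1) := by
    intro i hi
    rw [Finset.mem_Icc] at hi
    have hi0 : (i:ℝ) ≠ 0 := Nat.cast_ne_zero.mpr (by omega)
    have hpow : (i:ℝ)^j = (i:ℝ)^(j-1) * i := by
      rw [← pow_succ]
      congr 1
      omega
    rw [hc i, hpow]
    field_simp
  rw [Finset.sum_congr rfl hterm]
  have hA := alt_sum_choose_pow (j-1) k (by omega)
  have hins : Finset.range (k+1) = insert 0 (Finset.Icc 1 k) := by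
    ext i
    simp only [Finset.mem_range, Finset.mem_insert, Finset.mem_Icc]
    omega
  rw [hins, Finset.sum_insert (by simp)] at hA
  have h0 : (-1:ℝ)^(0:ℕ) * ((k.choose 0 : ℕ) : ℝ) * ((0:ℕ):ℝ)^(j-1)
      = if j = 1 then 1 else 0 := by
    rcases eq_or_ne j 1 with rfl | hj1
    · simp
    · rw [if_neg hj1]
      simp [zero_pow (by omega : j - 1 ≠ 0)]
  rw [h0] at hA
  rcases eq_or_ne j 1 with rfl | hj1
  · rw [if_pos rfl] at hA ⊢
    linarith
  · rw [if_neg hj1] at hA ⊢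
    linarith

private lemma iterWithin_eq {g : ℝ → ℝ} {n : ℕ} (hg : ContDiff ℝ (n : ℕ∞) g) {s : Set ℝ}
    (hs : UniqueDiffOn ℝ s) {m : ℕ} (hm : m ≤ n) {y : ℝ} (hy : y ∈ s) :
    iteratedDerivWithin m g s y = iteratedDeriv m g y := by
  have H : HasFTaylorSeriesUpTo (n : ℕ∞) g (ftaylorSeries ℝ g) :=
    contDiff_iff_ftaylorSeries.mp hg
  have H1 := (hasFTaylorSeriesUpToOn_univ_iff.mpr H).mono (Set.subset_univ s)
  have e1 := H1.eq_iteratedFDerivWithin_of_uniqueDiffOn (m := m) (by exact_mod_cast hm) hs hy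
  have e2 := H.eq_iteratedFDeriv (m := m) (by exact_mod_cast hm) y
  rw [iteratedDerivWithin_eq_iteratedFDerivWithin, iteratedDeriv_eq_iteratedFDeriv, ← e1, ← e2]

private lemma iter_comp_sub (f : ℝ → ℝ) (x : ℝ) (m : ℕ) (t : ℝ) :
    iteratedDeriv m (fun u => f (x - u)) t = (-1:ℝ)^m * iteratedDeriv m f (x - t) := by
  have h1 : (fun u => f (x - u)) = fun u => (fun z => f (x + z)) (-u) := by
    funext u; simp [sub_eq_add_neg]
  rw [h1, iteratedDeriv_comp_neg m (fun z => f (x + z)) t,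
    iteratedDeriv_comp_const_add m f x]
  simp [smul_eq_mul, sub_eq_add_neg]

theorem backward_difference_order_k (k : ℕ) (hk : 1 ≤ k) (f : ℝ → ℝ)
    (hf : ContDiff ℝ (k + 1) f)
    (c : ℕ → ℝ) (hc : ∀ i, c i = ((-1) ^ i / i) * (k.choose i)) (x : ℝ) :
    ∃ C > 0, ∃ h₀ > 0, ∀ h : ℝ, 0 < h → h ≤ h₀ →
      |deriv f x - (1 / h) * ∑ i ∈ Finset.Icc 1 k, c i * (f (x - i * h) - f x)|
        ≤ C * h ^ k := by
  have hfn : ContDiff ℝ ((k + 1 : ℕ) : ℕ∞) f := by exact_mod_cast hf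
  set g : ℝ → ℝ := fun t => f (x - t) with hgdef
  have hgc : ContDiff ℝ ((k + 1 : ℕ) : ℕ∞) g :=
    hfn.comp (contDiff_const.sub contDiff_id)
  have hk0 : (0:ℝ) < k := by
    have : 0 < k := hk
    exact_mod_cast this
  set s : Set ℝ := Set.Icc 0 (k:ℝ) with hsdef
  have hs : UniqueDiffOn ℝ s := uniqueDiffOn_Icc hk0
  have h0s : (0:ℝ) ∈ s := Set.left_mem_Icc.mpr hk0.le
  obtain ⟨M, hM⟩ := (isCompact_Icc (a := (0:ℝ)) (b := (k:ℝ))).exists_bound_of_continuousOn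
      ((hgc.continuous_iteratedDeriv (k+1) (by exact_mod_cast le_rfl)).continuousOn)
  have hM0 : 0 ≤ M := le_trans (norm_nonneg _) (hM 0 h0s)
  have hrem : ∀ t ∈ s, |g t - taylorWithinEval g k s 0 t| ≤ M * t^(k+1) / (k.factorial : ℕ) := by
    intro t ht
    have hC : ∀ y ∈ s, ‖iteratedDerivWithin (k+1) g s y‖ ≤ M := by
      intro y hy
      rw [iterWithin_eq hgc hs le_rfl hy]
      exact hM y hy
    have hb := taylor_mean_remainder_bound (f := g) (a := 0) (b := (k:ℝ)) (n := k) (x := t)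
      (C := M) hk0.le (by exact_mod_cast hgc.contDiffOn) ht hC
    simpa using hb
  set D : ℕ → ℝ := fun j => iteratedDeriv j f x with hDdef
  set T : ℝ → ℝ :=
    fun t => ∑ j ∈ Finset.range (k+1), ((j.factorial : ℕ) : ℝ)⁻¹ * t^j * ((-1)^j * D j) with hTdef
  have hT : ∀ t, taylorWithinEval g k s 0 t = T t := by
    intro t
    rw [taylor_within_apply, hTdef]
    refine Finset.sum_congr rfl fun j hj => ?_
    rw [Finset.mem_range] at hj
    rw [iterWithin_eq hgc hs (by omega) h0s, iter_comp_sub f x j 0]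
    simp only [sub_zero, smul_eq_mul, hDdef]
    try ring
  have hins : Finset.range (k+1) = insert 0 (Finset.Icc 1 k) := by
    ext i
    simp only [Finset.mem_range, Finset.mem_insert, Finset.mem_Icc]
    omega
  have hTsub : ∀ t, T t - f x = ∑ j ∈ Finset.Icc 1 k, ((j.factorial : ℕ) : ℝ)⁻¹ * t^j * ((-1)^j * D j) := by
    intro t
    rw [hTdef]
    simp only []
    rw [hins, Finset.sum_insert (by simp)]
    have hD0 : D 0 = f x := by rw [hDdef]; simp [iteratedDeriv_zero]
    simp [hD0]
  have hmain : ∀ h : ℝ, ∑ i ∈ Finset.Icc 1 k, c i * (T (i*h) - f x) = deriv f x * h := by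
    intro h
    have hD1 : D 1 = deriv f x := by rw [hDdef]; simp [iteratedDeriv_one]
    calc ∑ i ∈ Finset.Icc 1 k, c i * (T (i*h) - f x)
        = ∑ i ∈ Finset.Icc 1 k, ∑ j ∈ Finset.Icc 1 k,
            (((j.factorial : ℕ) : ℝ)⁻¹ * h^j * ((-1)^j * D j)) * (c i * (i:ℝ)^j) := by
          refine Finset.sum_congr rfl fun i _ => ?_
          rw [hTsub, Finset.mul_sum]
          refine Finset.sum_congr rfl fun j _ => ?_
          rw [mul_pow]
          ring
      _ = ∑ j ∈ Finset.Icc 1 k,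
            (((j.factorial : ℕ) : ℝ)⁻¹ * h^j * ((-1)^j * D j)) * ∑ i ∈ Finset.Icc 1 k, c i * (i:ℝ)^j := by
          rw [Finset.sum_comm]
          simp_rw [← Finset.mul_sum]
      _ = ∑ j ∈ Finset.Icc 1 k,
            (((j.factorial : ℕ) : ℝ)⁻¹ * h^j * ((-1)^j * D j)) * (if j = 1 then (-1:ℝ) else 0) := by
          refine Finset.sum_congr rfl fun j hj => ?_
          rw [S_val k hk c hc j hj]
      _ = deriv f x * h := by
          simp only [mul_ite, mul_neg_one, mul_zero,
            Finset.sum_ite_eq' (Finset.Icc 1 k) 1, Finset.mem_Icc, le_refl, hk, and_self,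
            if_true]
          rw [hD1]
          simp [Nat.factorial]
          ring
  set B : ℝ := (∑ i ∈ Finset.Icc 1 k, |c i| * (i:ℝ)^(k+1)) * M / (k.factorial : ℕ) with hBdef
  have hB0 : 0 ≤ B := by
    apply div_nonneg _ (by positivity)
    apply mul_nonneg _ hM0
    exact Finset.sum_nonneg fun i _ => mul_nonneg (abs_nonneg _) (by positivity)
  refine ⟨B + 1, by linarith, 1, one_pos, ?_⟩
  intro h hh hh1
  have hin : ∀ i ∈ Finset.Icc 1 k, (i:ℝ) * h ∈ s := by
    intro i hi
    rw [Finset.mem_Icc] at hi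
    have hik : (i:ℝ) ≤ k := by exact_mod_cast hi.2
    have hi0 : (0:ℝ) ≤ i := Nat.cast_nonneg i
    constructor
    · positivity
    · calc (i:ℝ) * h ≤ (i:ℝ) * 1 := by
            exact mul_le_mul_of_nonneg_left hh1 hi0
        _ ≤ k := by rw [mul_one]; exact hik
  have hEbound : |∑ i ∈ Finset.Icc 1 k, c i * (g ((i:ℝ)*h) - T ((i:ℝ)*h))| ≤ B * h^(k+1) := by
    calc |∑ i ∈ Finset.Icc 1 k, c i * (g ((i:ℝ)*h) - T ((i:ℝ)*h))|
        ≤ ∑ i ∈ Finset.Icc 1 k, |c i * (g ((i:ℝ)*h) - T ((i:ℝ)*h))| :=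
          Finset.abs_sum_le_sum_abs _ _
      _ ≤ ∑ i ∈ Finset.Icc 1 k, (|c i| * (i:ℝ)^(k+1)) * (M * h^(k+1) / (k.factorial : ℕ)) := by
          refine Finset.sum_le_sum fun i hi => ?_
          rw [abs_mul]
          have h1 : |g ((i:ℝ)*h) - T ((i:ℝ)*h)| ≤ M * ((i:ℝ)*h)^(k+1) / (k.factorial : ℕ) := by
            rw [← hT]
            exact hrem _ (hin i hi)
          calc |c i| * |g ((i:ℝ)*h) - T ((i:ℝ)*h)|
              ≤ |c i| * (M * ((i:ℝ)*h)^(k+1) / (k.factorial : ℕ)) :=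
                mul_le_mul_of_nonneg_left h1 (abs_nonneg _)
            _ = (|c i| * (i:ℝ)^(k+1)) * (M * h^(k+1) / (k.factorial : ℕ)) := by
                rw [mul_pow]
                ring
      _ = B * h^(k+1) := by
          rw [← Finset.sum_mul, hBdef]
          ring
  have hsplitsum : ∑ i ∈ Finset.Icc 1 k, c i * (f (x - i * h) - f x)
      = deriv f x * h + ∑ i ∈ Finset.Icc 1 k, c i * (g ((i:ℝ)*h) - T ((i:ℝ)*h)) := by
    rw [← hmain h, ← Finset.sum_add_distrib]
    refine Finset.sum_congr rfl fun i _ => ?_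
    have hfg : f (x - (i:ℝ) * h) = g ((i:ℝ)*h) := rfl
    rw [hfg]
    ring
  rw [hsplitsum]
  set E : ℝ := ∑ i ∈ Finset.Icc 1 k, c i * (g ((i:ℝ)*h) - T ((i:ℝ)*h)) with hEdef
  have hne : h ≠ 0 := ne_of_gt hh
  have hrw : deriv f x - (1/h) * (deriv f x * h + E) = -(E/h) := by
    field_simp
    ring
  rw [hrw, abs_neg, abs_div, abs_of_pos hh]
  calc |E| / h ≤ (B * h^(k+1)) / h := by
        gcongr
    _ = B * h^k := by
        rw [pow_succ]
        field_simp
    _ ≤ (B+1) * h^k := by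
        have : (0:ℝ) ≤ h^k := pow_nonneg hh.le k
        nlinarith
end

section
/- Let k be a positive integer and f a C^{k+1} function. Then f'(x) = (1/h)·Σ_{i=0}^k d_i·f(x-ih) + O(h^k), where d_0 = H_k (the kth harmonic number) and d_i = ((-1)^i/i)·C(k,i) for i = 1, ..., k. -/
lemma altsum : ∀ p k : ℕ, p < k →
    ∑ i ∈ Finset.range (k + 1), (-1 : ℤ) ^ i * (k.choose i) * (i : ℤ) ^ p = 0 := by
  intro p
  induction p using Nat.strong_induction_on with
  | _ p IH =>
    intro k hpk
    match p with
    | 0 =>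
      simpa using Int.alternating_sum_range_choose_of_ne (show k ≠ 0 by omega)
    | p + 1 =>
      obtain ⟨K, rfl⟩ : ∃ K, k = K + 1 := ⟨k - 1, by omega⟩
      rw [Finset.sum_range_succ']
      have step : ∀ j ∈ Finset.range (K + 1),
          (-1 : ℤ) ^ (j + 1) * ((K + 1).choose (j + 1)) * ((j : ℤ) + 1) ^ (p + 1)
            = (-((K : ℤ) + 1)) * ((-1) ^ j * (K.choose j) * ((j : ℤ) + 1) ^ p) := by
        intro j _
        have hc : ((K : ℤ) + 1) * (K.choose j) = ((K + 1).choose (j + 1)) * ((j : ℤ) + 1) := by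
          exact_mod_cast Nat.add_one_mul_choose_eq K j
        rw [pow_succ (-1 : ℤ), pow_succ ((j : ℤ) + 1)]
        linear_combination (-1 : ℤ) ^ j * ((j : ℤ) + 1) ^ p * hc
      push_cast
      rw [Finset.sum_congr rfl step, ← Finset.mul_sum]
      have inner : ∑ j ∈ Finset.range (K + 1), (-1 : ℤ) ^ j * (K.choose j) * ((j : ℤ) + 1) ^ p
          = 0 := by
        have expand : ∀ j : ℕ, ((j : ℤ) + 1) ^ p
            = ∑ q ∈ Finset.range (p + 1), (j : ℤ) ^ q * (p.choose q) := by
          intro j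
          rw [add_pow]
          exact Finset.sum_congr rfl fun q _ => by ring
        calc ∑ j ∈ Finset.range (K + 1), (-1 : ℤ) ^ j * (K.choose j) * ((j : ℤ) + 1) ^ p
            = ∑ j ∈ Finset.range (K + 1), ∑ q ∈ Finset.range (p + 1),
                (p.choose q : ℤ) * ((-1) ^ j * (K.choose j) * (j : ℤ) ^ q) := by
              refine Finset.sum_congr rfl fun j _ => ?_
              rw [expand j, Finset.mul_sum]
              exact Finset.sum_congr rfl fun q _ => by ring
          _ = ∑ q ∈ Finset.range (p + 1), (p.choose q : ℤ) *
                ∑ j ∈ Finset.range (K + 1), (-1) ^ j * (K.choose j) * (j : ℤ) ^ q := by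
              rw [Finset.sum_comm]
              exact Finset.sum_congr rfl fun q _ => by rw [Finset.mul_sum]
          _ = 0 := by
              refine Finset.sum_eq_zero fun q hq => ?_
              have hq' := Finset.mem_range.mp hq
              rw [IH q hq' K (by omega), mul_zero]
      rw [inner]
      ring

lemma harm : ∀ k : ℕ, ∑ i ∈ Finset.range (k + 1), ((-1 : ℝ) ^ i / i) * (k.choose i)
    = - ∑ j ∈ Finset.Icc 1 k, (1 : ℝ) / j := by
  intro k
  induction k with
  | zero => simp
  | succ k IH =>
    have hsplit : ∑ i ∈ Finset.range (k + 2), ((-1 : ℝ) ^ i / i) * ((k + 1).choose i)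
        = ∑ j ∈ Finset.range (k + 1), ((-1 : ℝ) ^ (j + 1) / (j + 1)) * ((k + 1).choose (j + 1)) := by
      rw [Finset.sum_range_succ']
      simp
    rw [hsplit]
    have pascal : ∀ j ∈ Finset.range (k + 1),
        ((-1 : ℝ) ^ (j + 1) / (j + 1)) * ((k + 1).choose (j + 1))
          = ((-1 : ℝ) ^ (j + 1) / (j + 1)) * (k.choose j)
            + ((-1 : ℝ) ^ (j + 1) / (j + 1)) * (k.choose (j + 1)) := by
      intro j _
      have : ((k + 1).choose (j + 1) : ℝ) = (k.choose j : ℝ) + (k.choose (j + 1) : ℝ) := by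
        exact_mod_cast Nat.choose_succ_succ k j
      rw [this]; ring
    rw [Finset.sum_congr rfl pascal, Finset.sum_add_distrib]
    -- second part equals S_k = -H_k
    have hB : ∑ j ∈ Finset.range (k + 1), ((-1 : ℝ) ^ (j + 1) / (j + 1)) * (k.choose (j + 1))
        = - ∑ j ∈ Finset.Icc 1 k, (1 : ℝ) / j := by
      have e1 : ∑ i ∈ Finset.range (k + 2), ((-1 : ℝ) ^ i / i) * (k.choose i)
          = ∑ i ∈ Finset.range (k + 1), ((-1 : ℝ) ^ i / i) * (k.choose i) := by
        rw [Finset.sum_range_succ]; simp [Nat.choose_succ_self]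
      have e2 : ∑ i ∈ Finset.range (k + 2), ((-1 : ℝ) ^ i / i) * (k.choose i)
          = ∑ j ∈ Finset.range (k + 1), ((-1 : ℝ) ^ (j + 1) / (j + 1)) * (k.choose (j + 1)) := by
        rw [Finset.sum_range_succ']; simp
      rw [← e2, e1, IH]
    rw [hB]
    -- first part equals -1/(k+1)
    have hT : ∑ j ∈ Finset.range (k + 1), ((-1 : ℝ) ^ (j + 1) / (j + 1)) * (k.choose j)
        = - (1 / (k + 1 : ℝ)) := by
      have step : ∀ j ∈ Finset.range (k + 1),
          ((-1 : ℝ) ^ (j + 1) / (j + 1)) * (k.choose j)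
            = (1 / ((k : ℝ) + 1)) * ((-1 : ℝ) ^ (j + 1) * ((k + 1).choose (j + 1))) := by
        intro j _
        have hc : ((k : ℝ) + 1) * (k.choose j) = ((k + 1).choose (j + 1) : ℝ) * ((j : ℝ) + 1) := by
          exact_mod_cast Nat.add_one_mul_choose_eq k j
        have hj : ((j : ℝ) + 1) ≠ 0 := by positivity
        have hk1 : ((k : ℝ) + 1) ≠ 0 := by positivity
        field_simp
        linear_combination hc
      rw [Finset.sum_congr rfl step, ← Finset.mul_sum]
      have halt : ∑ j ∈ Finset.range (k + 1), (-1 : ℝ) ^ (j + 1) * ((k + 1).choose (j + 1))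
          = -1 := by
        have h0 : ∑ i ∈ Finset.range (k + 2), (-1 : ℝ) ^ i * ((k + 1).choose i) = 0 := by
          have := Int.alternating_sum_range_choose_of_ne (show k + 1 ≠ 0 by omega)
          exact_mod_cast congrArg (Int.cast : ℤ → ℝ) this
        rw [Finset.sum_range_succ'] at h0
        simp only [pow_zero, Nat.choose_zero_right, Nat.cast_one, mul_one, one_mul] at h0
        linarith
      rw [halt]
      field_simp
    rw [hT]
    rw [Finset.sum_Icc_succ_top (by omega : 1 ≤ k + 1)]
    push_cast
    ring

theorem backward_difference_explicit (k : ℕ) (hk : 1 ≤ k) (f : ℝ → ℝ)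
    (hf : ContDiff ℝ (k + 1) f)
    (d : ℕ → ℝ)
    (hd0 : d 0 = ∑ j ∈ Finset.Icc 1 k, (1 : ℝ) / j)
    (hdi : ∀ i, 1 ≤ i → i ≤ k → d i = ((-1) ^ i / i) * (k.choose i)) (x : ℝ) :
    ∃ C > 0, ∃ h₀ > 0, ∀ h : ℝ, 0 < h → h ≤ h₀ →
      |deriv f x - (1 / h) * ∑ i ∈ Finset.range (k + 1), d i * f (x - i * h)|
        ≤ C * h ^ k := by
  have hg : ContDiff ℝ (k + 1) (fun t : ℝ => f (x - t)) :=
    hf.comp (contDiff_const.sub contDiff_id)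
  set g : ℝ → ℝ := fun t : ℝ => f (x - t) with hgdef
  have hK0 : (0 : ℝ) < (k : ℝ) := by exact_mod_cast hk
  set K : ℝ := (k : ℝ) with hKdef
  have hKK : (0 : ℝ) ≤ K := le_of_lt hK0
  have hud : UniqueDiffOn ℝ (Set.Icc (0 : ℝ) K) := uniqueDiffOn_Icc hK0
  -- iterated derivatives within the interval agree with global ones
  have hglob : HasFTaylorSeriesUpToOn (k + 1 : ℕ) g (ftaylorSeries ℝ g) Set.univ := by
    rw [← ftaylorSeriesWithin_univ]
    exact (hg.contDiffOn.of_le (by exact_mod_cast le_rfl)).ftaylorSeriesWithin uniqueDiffOn_univ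
  have hIcc : HasFTaylorSeriesUpToOn (k + 1 : ℕ) g (ftaylorSeries ℝ g) (Set.Icc 0 K) :=
    hglob.mono (Set.subset_univ _)
  have hwithin : ∀ m : ℕ, m ≤ k + 1 → ∀ y ∈ Set.Icc (0 : ℝ) K,
      iteratedDerivWithin m g (Set.Icc 0 K) y = iteratedDeriv m g y := by
    intro m hm y hy
    have e1 := hIcc.eq_iteratedFDerivWithin_of_uniqueDiffOn (m := m) (by exact_mod_cast hm) hud hy
    have e2 := hglob.eq_iteratedFDerivWithin_of_uniqueDiffOn (m := m) (by exact_mod_cast hm)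
      uniqueDiffOn_univ (Set.mem_univ y)
    rw [iteratedFDerivWithin_univ] at e2
    rw [iteratedDerivWithin, iteratedDeriv, ← e1, e2]
  -- iterated derivatives of g at 0
  have hgder : ∀ m : ℕ, iteratedDeriv m g 0 = (-1 : ℝ) ^ m * iteratedDeriv m f x := by
    intro m
    have hge : g = fun t => (fun u => f (x + u)) (-t) := by
      funext t; simp [hgdef, sub_eq_add_neg]
    calc iteratedDeriv m g 0
        = iteratedDeriv m (fun t => (fun u => f (x + u)) (-t)) 0 := by rw [← hge]
      _ = (-1 : ℝ) ^ m • iteratedDeriv m (fun u => f (x + u)) (-0) :=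
          iteratedDeriv_comp_neg m (fun u => f (x + u)) 0
      _ = (-1 : ℝ) ^ m * iteratedDeriv m f x := by
          rw [congrFun (iteratedDeriv_comp_const_add m f x) (-0)]
          norm_num [smul_eq_mul]
  -- bound on the (k+1)-st derivative
  obtain ⟨M, hM⟩ := (isCompact_Icc (a := (0 : ℝ)) (b := K)).exists_bound_of_continuousOn
    ((hg.continuous_iteratedDeriv (k + 1) (by exact_mod_cast le_rfl)).continuousOn)
  have hM0 : 0 ≤ M := le_trans (norm_nonneg _) (hM 0 ⟨le_rfl, hKK⟩)
  -- Taylor estimate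
  have taylor : ∀ i : ℕ, i ≤ k → ∀ h : ℝ, 0 < h → h ≤ 1 →
      ‖g ((i : ℝ) * h) - taylorWithinEval g k (Set.Icc 0 K) 0 ((i : ℝ) * h)‖
        ≤ (M * K ^ (k + 1) / (k.factorial : ℝ)) * h ^ (k + 1) := by
    intro i hi h hh0 hh1
    have hmem : (i : ℝ) * h ∈ Set.Icc (0 : ℝ) K := by
      constructor
      · positivity
      · calc (i : ℝ) * h ≤ (i : ℝ) * 1 := by
              exact mul_le_mul_of_nonneg_left hh1 (by positivity)
          _ = (i : ℝ) := mul_one _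
          _ ≤ K := by rw [hKdef]; exact_mod_cast hi
    have hCbound : ∀ y ∈ Set.Icc (0 : ℝ) K,
        ‖iteratedDerivWithin (k + 1) g (Set.Icc 0 K) y‖ ≤ M := by
      intro y hy; rw [hwithin (k + 1) le_rfl y hy]; exact hM y hy
    have hrem := taylor_mean_remainder_bound (n := k) hKK hg.contDiffOn hmem hCbound
    calc ‖g ((i : ℝ) * h) - taylorWithinEval g k (Set.Icc 0 K) 0 ((i : ℝ) * h)‖
        ≤ M * ((i : ℝ) * h - 0) ^ (k + 1) / (k.factorial : ℝ) := hrem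
      _ = (M * (i : ℝ) ^ (k + 1) / (k.factorial : ℝ)) * h ^ (k + 1) := by
          rw [sub_zero, mul_pow]; ring
      _ ≤ (M * K ^ (k + 1) / (k.factorial : ℝ)) * h ^ (k + 1) := by
          have hik : (i : ℝ) ≤ K := by rw [hKdef]; exact_mod_cast hi
          gcongr
  -- explicit Taylor polynomial
  set P : ℝ → ℝ := fun t =>
    ∑ m ∈ Finset.range (k + 1), (((m.factorial : ℝ))⁻¹ * t ^ m) * ((-1) ^ m * iteratedDeriv m f x)
    with hPdef
  have hpoly : ∀ t : ℝ, taylorWithinEval g k (Set.Icc 0 K) 0 t = P t := by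
    intro t
    rw [taylor_within_apply, hPdef]
    refine Finset.sum_congr rfl fun m hm => ?_
    rw [hwithin m (by have := Finset.mem_range.mp hm; omega) 0 ⟨le_rfl, hKK⟩, hgder m]
    rw [smul_eq_mul, sub_zero]
  -- sums of d i * i^m
  have hsplit : ∀ F : ℕ → ℝ,
      ∑ i ∈ Finset.range (k + 1), F i = F 0 + ∑ i ∈ Finset.Icc 1 k, F i := by
    intro F
    rw [Finset.range_eq_Ico, Finset.sum_eq_sum_Ico_succ_bot (by omega), Finset.Ico_add_one_right_eq_Icc]
  have hA : ∀ m : ℕ, m ≤ k →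
      ∑ i ∈ Finset.range (k + 1), d i * (i : ℝ) ^ m = if m = 1 then -1 else 0 := by
    intro m hm
    match m with
    | 0 =>
      rw [if_neg (by omega)]
      rw [hsplit]
      have h1 : ∑ i ∈ Finset.Icc 1 k, d i * (i : ℝ) ^ 0
          = ∑ i ∈ Finset.Icc 1 k, ((-1 : ℝ) ^ i / i) * (k.choose i) := by
        refine Finset.sum_congr rfl fun i hi => ?_
        obtain ⟨hi1, hi2⟩ := Finset.mem_Icc.mp hi
        rw [pow_zero, mul_one, hdi i hi1 hi2]
      have h2 := hsplit (fun i => ((-1 : ℝ) ^ i / i) * (k.choose i))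
      have h3 := harm k
      simp only [Nat.cast_zero, div_zero, zero_mul, zero_add] at h2
      rw [pow_zero, mul_one, hd0, h1, ← h2, h3]
      ring
    | m + 1 =>
      rw [hsplit]
      have h1 : ∑ i ∈ Finset.Icc 1 k, d i * (i : ℝ) ^ (m + 1)
          = ∑ i ∈ Finset.Icc 1 k, (-1 : ℝ) ^ i * (k.choose i) * (i : ℝ) ^ m := by
        refine Finset.sum_congr rfl fun i hi => ?_
        obtain ⟨hi1, hi2⟩ := Finset.mem_Icc.mp hi
        rw [hdi i hi1 hi2]
        have hi0 : (i : ℝ) ≠ 0 := Nat.cast_ne_zero.mpr (by omega)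
        field_simp
        ring
      have h2 : ∑ i ∈ Finset.range (k + 1), (-1 : ℝ) ^ i * (k.choose i) * (i : ℝ) ^ m = 0 := by
        have := altsum m k (by omega)
        exact_mod_cast this
      have h3 : ∑ i ∈ Finset.range (k + 1), (-1 : ℝ) ^ i * (k.choose i) * (i : ℝ) ^ m
          = (-1 : ℝ) ^ 0 * (k.choose 0) * ((0 : ℕ) : ℝ) ^ m
            + ∑ i ∈ Finset.Icc 1 k, (-1 : ℝ) ^ i * (k.choose i) * (i : ℝ) ^ m := hsplit _
      rw [h2] at h3
      rw [h1]
      have hF0 : d 0 * ((0 : ℕ) : ℝ) ^ (m + 1) = 0 := by simp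
      rw [hF0, zero_add]
      rcases Nat.eq_zero_or_pos m with rfl | hm0
      · rw [if_pos rfl]
        simp only [pow_zero, one_mul, mul_one, Nat.choose_zero_right, Nat.cast_one] at h3 ⊢
        linarith
      · rw [if_neg (by omega)]
        rw [Nat.cast_zero, zero_pow (by omega : m ≠ 0)] at h3
        simp only [mul_zero, zero_add] at h3
        linarith
  have hkey : ∀ h : ℝ,
      ∑ i ∈ Finset.range (k + 1), d i * P ((i : ℝ) * h) = deriv f x * h := by
    intro h
    have e1 : ∑ i ∈ Finset.range (k + 1), d i * P ((i : ℝ) * h)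
        = ∑ i ∈ Finset.range (k + 1), ∑ m ∈ Finset.range (k + 1),
            ((((m.factorial : ℝ))⁻¹ * h ^ m) * ((-1) ^ m * iteratedDeriv m f x))
              * (d i * (i : ℝ) ^ m) := by
      refine Finset.sum_congr rfl fun i _ => ?_
      rw [hPdef, Finset.mul_sum]
      refine Finset.sum_congr rfl fun m _ => ?_
      rw [mul_pow]
      ring
    rw [e1, Finset.sum_comm]
    have e2 : ∀ m ∈ Finset.range (k + 1),
        ∑ i ∈ Finset.range (k + 1),
            ((((m.factorial : ℝ))⁻¹ * h ^ m) * ((-1) ^ m * iteratedDeriv m f x))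
              * (d i * (i : ℝ) ^ m)
          = ((((m.factorial : ℝ))⁻¹ * h ^ m) * ((-1) ^ m * iteratedDeriv m f x))
              * (if m = 1 then (-1 : ℝ) else 0) := by
      intro m hm
      rw [← Finset.mul_sum, hA m (by have := Finset.mem_range.mp hm; omega)]
    rw [Finset.sum_congr rfl e2]
    rw [Finset.sum_eq_single 1]
    · norm_num [iteratedDeriv_one]
      ring
    · intro m _ hne; rw [if_neg hne, mul_zero]
    · intro habs; exact absurd (Finset.mem_range.mpr (by omega)) habs
  -- conclusion
  have hC0 : 0 ≤ (∑ i ∈ Finset.range (k + 1), |d i|) * (M * K ^ (k + 1) / (k.factorial : ℝ)) :=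
    mul_nonneg (Finset.sum_nonneg fun i _ => abs_nonneg _)
      (div_nonneg (mul_nonneg hM0 (by positivity)) (by positivity))
  refine ⟨(∑ i ∈ Finset.range (k + 1), |d i|) * (M * K ^ (k + 1) / (k.factorial : ℝ)) + 1,
    by linarith, 1, one_pos, ?_⟩
  intro h hh0 hh1
  have hne : h ≠ 0 := ne_of_gt hh0
  have hsum : deriv f x - (1 / h) * ∑ i ∈ Finset.range (k + 1), d i * f (x - i * h)
      = (1 / h) * ∑ i ∈ Finset.range (k + 1), d i * (P ((i : ℝ) * h) - g ((i : ℝ) * h)) := by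
    have e3 : ∑ i ∈ Finset.range (k + 1), d i * (P ((i : ℝ) * h) - g ((i : ℝ) * h))
        = deriv f x * h - ∑ i ∈ Finset.range (k + 1), d i * f (x - i * h) := by
      rw [← hkey h, ← Finset.sum_sub_distrib]
      refine Finset.sum_congr rfl fun i _ => ?_
      have hgi : g ((i : ℝ) * h) = f (x - i * h) := rfl
      rw [hgi]; ring
    rw [e3]
    field_simp
  rw [hsum, abs_mul, abs_of_pos (by positivity : (0 : ℝ) < 1 / h)]
  have bound : |∑ i ∈ Finset.range (k + 1), d i * (P ((i : ℝ) * h) - g ((i : ℝ) * h))|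
      ≤ (∑ i ∈ Finset.range (k + 1), |d i|)
          * ((M * K ^ (k + 1) / (k.factorial : ℝ)) * h ^ (k + 1)) := by
    calc |∑ i ∈ Finset.range (k + 1), d i * (P ((i : ℝ) * h) - g ((i : ℝ) * h))|
        ≤ ∑ i ∈ Finset.range (k + 1), |d i * (P ((i : ℝ) * h) - g ((i : ℝ) * h))| :=
          Finset.abs_sum_le_sum_abs _ _
      _ ≤ ∑ i ∈ Finset.range (k + 1),
            |d i| * ((M * K ^ (k + 1) / (k.factorial : ℝ)) * h ^ (k + 1)) := by
          refine Finset.sum_le_sum fun i hi => ?_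
          rw [abs_mul]
          refine mul_le_mul_of_nonneg_left ?_ (abs_nonneg _)
          have htay := taylor i (by have := Finset.mem_range.mp hi; omega) h hh0 hh1
          rw [← hpoly ((i : ℝ) * h)]
          calc |taylorWithinEval g k (Set.Icc 0 K) 0 ((i : ℝ) * h) - g ((i : ℝ) * h)|
              = ‖g ((i : ℝ) * h) - taylorWithinEval g k (Set.Icc 0 K) 0 ((i : ℝ) * h)‖ := by
                rw [Real.norm_eq_abs, abs_sub_comm]
            _ ≤ _ := htay
      _ = (∑ i ∈ Finset.range (k + 1), |d i|)
            * ((M * K ^ (k + 1) / (k.factorial : ℝ)) * h ^ (k + 1)) := by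
          rw [Finset.sum_mul]
  calc (1 / h) * |∑ i ∈ Finset.range (k + 1), d i * (P ((i : ℝ) * h) - g ((i : ℝ) * h))|
      ≤ (1 / h) * ((∑ i ∈ Finset.range (k + 1), |d i|)
          * ((M * K ^ (k + 1) / (k.factorial : ℝ)) * h ^ (k + 1))) :=
        mul_le_mul_of_nonneg_left bound (by positivity)
    _ = (∑ i ∈ Finset.range (k + 1), |d i|) * (M * K ^ (k + 1) / (k.factorial : ℝ)) * h ^ k := by
        rw [pow_succ]
        field_simp
        ring
    _ ≤ ((∑ i ∈ Finset.range (k + 1), |d i|) * (M * K ^ (k + 1) / (k.factorial : ℝ)) + 1)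
          * h ^ k := by
        have hhk : (0 : ℝ) ≤ h ^ k := by positivity
        nlinarith
end

section
/- Let k be a positive integer and f a C^{k+1} function. Then f'(x) = (1/h)·Σ_{i=1}^k c_i·[f(x+ih) - f(x)] + O(h^k), where c_i = ((-1)^{i-1}/i)·C(k,i). -/
open Finset Polynomial Set
open scoped fwdDiff

private lemma fwdDiff_iter_poly : ∀ (k : ℕ) (p : Polynomial ℝ), p.degree < (k : WithBot ℕ) →
    ∀ y : ℝ, (Δ_[(1:ℝ)])^[k] (fun z => p.eval z) y = 0 := by
  intro k
  induction k with
  | zero =>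
    intro p hp y
    have hp0 : p = 0 := by
      by_contra h
      exact absurd hp (not_lt.2 (by simpa using Polynomial.zero_le_degree_iff.2 h))
    subst hp0
    simp
  | succ k ih =>
    intro p hp y
    rw [Function.iterate_succ_apply]
    have hΔ : Δ_[(1:ℝ)] (fun z => p.eval z) = fun z => (Polynomial.taylor 1 p - p).eval z := by
      funext z
      simp [fwdDiff, Polynomial.taylor_eval]
    rw [hΔ]
    apply ih
    by_cases hp0 : p = 0
    · subst hp0
      simp only [map_zero, sub_zero, Polynomial.degree_zero]
      exact WithBot.bot_lt_coe k
    · have h1 : Polynomial.taylor 1 p ≠ 0 := fun h => hp0 (Polynomial.taylor_injective 1 (by simpa using h))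
      have hdeg : (Polynomial.taylor 1 p).degree = p.degree := by
        rw [Polynomial.degree_eq_natDegree h1, Polynomial.degree_eq_natDegree hp0,
          Polynomial.natDegree_taylor]
      have hlc : (Polynomial.taylor 1 p).leadingCoeff = p.leadingCoeff := by
        rw [Polynomial.taylor_apply]
        rw [Polynomial.leadingCoeff_comp (by rw [Polynomial.natDegree_X_add_C]; omega)]
        rw [Polynomial.leadingCoeff_X_add_C, one_pow, mul_one]
      have h2 : (Polynomial.taylor 1 p - p).degree < p.degree := by
        have := Polynomial.degree_sub_lt hdeg h1 hlc
        rwa [hdeg] at this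
      have h3 : p.degree ≤ (k : WithBot ℕ) := by
        rw [Polynomial.degree_eq_natDegree hp0] at hp ⊢
        exact_mod_cast Nat.lt_succ_iff.1 (by exact_mod_cast hp)
      exact lt_of_lt_of_le h2 h3

private lemma alt_sum_zero (k m : ℕ) (hm : m < k) :
    ∑ i ∈ Finset.range (k + 1), (-1 : ℝ) ^ i * (k.choose i) * (i : ℝ) ^ m = 0 := by
  have h0 := fwdDiff_iter_poly k (Polynomial.X ^ m)
    (by rw [Polynomial.degree_X_pow]; exact_mod_cast hm) 0
  rw [fwdDiff_iter_eq_sum_shift] at h0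
  have h1 : ∑ i ∈ Finset.range (k + 1), (-1 : ℝ) ^ (k - i) * (k.choose i) * (i : ℝ) ^ m = 0 := by
    rw [← h0]
    apply Finset.sum_congr rfl
    intro i _
    rw [zsmul_eq_mul]
    push_cast
    simp
  have h2 : ∀ i ∈ Finset.range (k + 1), (-1 : ℝ) ^ i * (k.choose i) * (i : ℝ) ^ m
      = (-1 : ℝ) ^ k * ((-1 : ℝ) ^ (k - i) * (k.choose i) * (i : ℝ) ^ m) := by
    intro i hi
    have e : (-1 : ℝ) ^ k = (-1 : ℝ) ^ (k - i) * (-1 : ℝ) ^ i := by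
      rw [← pow_add, Nat.sub_add_cancel (Nat.lt_succ_iff.1 (Finset.mem_range.1 hi))]
    have h4 : (-1 : ℝ) ^ (k - i) * (-1 : ℝ) ^ (k - i) = 1 := by
      rw [← pow_add]
      exact Even.neg_one_pow ⟨k - i, rfl⟩
    rw [e, show ((-1 : ℝ) ^ (k - i) * (-1 : ℝ) ^ i) * ((-1 : ℝ) ^ (k - i) * (k.choose i) * (i : ℝ) ^ m)
      = ((-1 : ℝ) ^ (k - i) * (-1 : ℝ) ^ (k - i)) * ((-1 : ℝ) ^ i * (k.choose i) * (i : ℝ) ^ m) from by ring,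
      h4, one_mul]
  rw [Finset.sum_congr rfl h2, ← Finset.mul_sum, h1, mul_zero]

private lemma sum_c_pow (k j : ℕ) (hj1 : 1 ≤ j) (hjk : j ≤ k) :
    ∑ i ∈ Finset.Icc 1 k, ((-1 : ℝ) ^ (i - 1) / i * (k.choose i)) * (i : ℝ) ^ j
      = if j = 1 then 1 else 0 := by
  have h0 := alt_sum_zero k (j - 1) (by omega)
  rw [Finset.range_eq_Ico, Finset.sum_eq_sum_Ico_succ_bot (by omega), Finset.Ico_add_one_right_eq_Icc] at h0
  have key : ∑ i ∈ Finset.Icc 1 k, ((-1 : ℝ) ^ (i - 1) / i * (k.choose i)) * (i : ℝ) ^ j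
      = ∑ i ∈ Finset.Icc 1 k, -((-1 : ℝ) ^ i * (k.choose i) * (i : ℝ) ^ (j - 1)) := by
    apply Finset.sum_congr rfl
    intro i hi
    obtain ⟨hi1, hik⟩ := Finset.mem_Icc.1 hi
    have hiR : (i : ℝ) ≠ 0 := Nat.cast_ne_zero.2 (by omega)
    have e1 : (i : ℝ) ^ j = (i : ℝ) ^ (j - 1) * i := by
      conv_lhs => rw [show j = (j - 1) + 1 by omega]
      rw [pow_succ]
    have e2 : (-1 : ℝ) ^ i = (-1 : ℝ) ^ (i - 1) * (-1) := by
      conv_lhs => rw [show i = (i - 1) + 1 by omega]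
      rw [pow_succ]
    rw [e1, e2]
    field_simp
  rw [key, Finset.sum_neg_distrib, neg_eq_iff_eq_neg.2 (eq_neg_of_add_eq_zero_right h0)]
  rcases eq_or_ne j 1 with h | h
  · simp [h]
  · simp [h, zero_pow (show j - 1 ≠ 0 by omega)]

private lemma iterDW {n : ℕ} {f : ℝ → ℝ} (hf : ContDiff ℝ (n : ℕ∞) f)
    {s : Set ℝ} (hs : UniqueDiffOn ℝ s) {m : ℕ} (hm : m ≤ n) {y : ℝ} (hy : y ∈ s) :
    iteratedDerivWithin m f s y = iteratedDeriv m f y := by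
  rw [iteratedDerivWithin_eq_iteratedFDerivWithin, iteratedDeriv_eq_iteratedFDeriv]
  congr 1
  have h1 : HasFTaylorSeriesUpToOn (n : ℕ∞) f (ftaylorSeries ℝ f) s :=
    (hasFTaylorSeriesUpToOn_univ_iff.2 (contDiff_iff_ftaylorSeries.1 hf)).mono (subset_univ s)
  exact (h1.eq_iteratedFDerivWithin_of_uniqueDiffOn (by exact_mod_cast hm) hs hy).symm

private lemma taylor_est (k : ℕ) (f : ℝ → ℝ) (hf : ContDiff ℝ (k + 1) f) (x : ℝ)
    (i : ℕ) (hi1 : 1 ≤ i) (hik : i ≤ k) (h : ℝ) (h0 : 0 < h) (h1 : h ≤ 1)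
    (M : ℝ) (hM : ∀ y ∈ Icc x (x + k), |iteratedDeriv (k + 1) f y| ≤ M) :
    |f (x + i * h) - ∑ j ∈ Finset.range (k + 1),
        ((j.factorial : ℝ)⁻¹ * ((i : ℝ) * h) ^ j) * iteratedDeriv j f x|
      ≤ M * ((i : ℝ) * h) ^ (k + 1) / k.factorial := by
  have hf' : ContDiff ℝ ((k + 1 : ℕ) : ℕ∞) f := by exact_mod_cast hf
  have hxb : x < x + i * h := by
    have : (0 : ℝ) < (i : ℝ) * h := by positivity
    linarith
  have hsub : Icc x (x + i * h) ⊆ Icc x (x + k) := by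
    apply Set.Icc_subset_Icc le_rfl
    have : (i : ℝ) * h ≤ (k : ℝ) * 1 :=
      mul_le_mul (by exact_mod_cast hik) h1 h0.le (by positivity)
    linarith
  have hud : UniqueDiffOn ℝ (Icc x (x + i * h)) := uniqueDiffOn_Icc hxb
  have hC : ∀ y ∈ Icc x (x + i * h),
      ‖iteratedDerivWithin (k + 1) f (Icc x (x + i * h)) y‖ ≤ M := by
    intro y hy
    rw [iterDW hf' hud le_rfl hy]
    exact hM y (hsub hy)
  have htb := taylor_mean_remainder_bound (f := f) hxb.le hf.contDiffOn
    (right_mem_Icc.2 hxb.le) hC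
  have hT : taylorWithinEval f k (Icc x (x + i * h)) x (x + i * h)
      = ∑ j ∈ Finset.range (k + 1), ((j.factorial : ℝ)⁻¹ * ((i : ℝ) * h) ^ j) * iteratedDeriv j f x := by
    rw [taylor_within_apply]
    apply Finset.sum_congr rfl
    intro j hj
    have hj' := Finset.mem_range.1 hj
    rw [iterDW hf' hud (by omega : j ≤ k + 1) (left_mem_Icc.2 hxb.le), smul_eq_mul,
      show x + (i : ℝ) * h - x = (i : ℝ) * h from by ring]
  rw [hT] at htb
  rw [show x + (i : ℝ) * h - x = (i : ℝ) * h from by ring] at htb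
  exact htb

theorem forward_difference_order_k (k : ℕ) (hk : 1 ≤ k) (f : ℝ → ℝ)
    (hf : ContDiff ℝ (k + 1) f)
    (c : ℕ → ℝ) (hc : ∀ i, c i = ((-1) ^ (i - 1) / i) * (k.choose i)) (x : ℝ) :
    ∃ C > 0, ∃ h₀ > 0, ∀ h : ℝ, 0 < h → h ≤ h₀ →
      |deriv f x - (1 / h) * ∑ i ∈ Finset.Icc 1 k, c i * (f (x + i * h) - f x)|
        ≤ C * h ^ k := by
  obtain ⟨M, hM⟩ := (isCompact_Icc : IsCompact (Icc x (x + (k : ℝ)))).exists_bound_of_continuousOn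
    ((hf.continuous_iteratedDeriv (k + 1) (by norm_cast)).continuousOn)
  set M₀ := max M 0 with hM₀def
  have hM0 : 0 ≤ M₀ := le_max_right _ _
  have hM' : ∀ y ∈ Icc x (x + (k : ℝ)), |iteratedDeriv (k + 1) f y| ≤ M₀ := fun y hy =>
    (hM y hy).trans (le_max_left _ _)
  set C := (∑ i ∈ Finset.Icc 1 k, |c i| * M₀ * (i : ℝ) ^ (k + 1) / k.factorial) + 1 with hCdef
  have hCpos : 0 < C := by
    have hnn : 0 ≤ ∑ i ∈ Finset.Icc 1 k, |c i| * M₀ * (i : ℝ) ^ (k + 1) / k.factorial := by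
      apply Finset.sum_nonneg
      intro i _
      have := abs_nonneg (c i)
      positivity
    rw [hCdef]
    linarith
  refine ⟨C, hCpos, 1, one_pos, ?_⟩
  intro h hh0 hh1
  have hne : h ≠ 0 := ne_of_gt hh0
  have hEbound : ∀ i ∈ Finset.Icc 1 k,
      |f (x + i * h) - ∑ j ∈ Finset.range (k + 1),
        ((j.factorial : ℝ)⁻¹ * ((i : ℝ) * h) ^ j) * iteratedDeriv j f x|
      ≤ M₀ * ((i : ℝ) * h) ^ (k + 1) / k.factorial := by
    intro i hi
    obtain ⟨hi1, hik⟩ := Finset.mem_Icc.1 hi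
    exact taylor_est k f hf x i hi1 hik h hh0 hh1 M₀ hM'
  have hmain : ∑ i ∈ Finset.Icc 1 k, c i * (f (x + i * h) - f x)
      = h * deriv f x + ∑ i ∈ Finset.Icc 1 k, c i *
          (f (x + i * h) - ∑ j ∈ Finset.range (k + 1),
            ((j.factorial : ℝ)⁻¹ * ((i : ℝ) * h) ^ j) * iteratedDeriv j f x) := by
    have hsplit : ∀ i ∈ Finset.Icc 1 k, c i * (f (x + i * h) - f x)
        = c i * ((∑ j ∈ Finset.range (k + 1),
            ((j.factorial : ℝ)⁻¹ * ((i : ℝ) * h) ^ j) * iteratedDeriv j f x) - f x)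
          + c i * (f (x + i * h) - ∑ j ∈ Finset.range (k + 1),
            ((j.factorial : ℝ)⁻¹ * ((i : ℝ) * h) ^ j) * iteratedDeriv j f x) := by
      intro i _
      ring
    rw [Finset.sum_congr rfl hsplit, Finset.sum_add_distrib]
    congr 1
    have step1 : ∀ i ∈ Finset.Icc 1 k, c i * ((∑ j ∈ Finset.range (k + 1),
          ((j.factorial : ℝ)⁻¹ * ((i : ℝ) * h) ^ j) * iteratedDeriv j f x) - f x)
        = ∑ j ∈ Finset.range k,
            c i * ((((j+1).factorial : ℝ)⁻¹ * ((i : ℝ) * h) ^ (j+1)) * iteratedDeriv (j+1) f x) := by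
      intro i _
      rw [← Finset.mul_sum]
      congr 1
      rw [Finset.sum_range_succ']
      simp [iteratedDeriv_zero]
    rw [Finset.sum_congr rfl step1, Finset.sum_comm]
    have step2 : ∀ j ∈ Finset.range k,
        (∑ i ∈ Finset.Icc 1 k,
          c i * ((((j+1).factorial : ℝ)⁻¹ * ((i : ℝ) * h) ^ (j+1)) * iteratedDeriv (j+1) f x))
        = if j = 0 then h * deriv f x else 0 := by
      intro j hj
      have hjk := Finset.mem_range.1 hj
      have e1 : ∑ i ∈ Finset.Icc 1 k,
          c i * ((((j+1).factorial : ℝ)⁻¹ * ((i : ℝ) * h) ^ (j+1)) * iteratedDeriv (j+1) f x)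
          = ((((j+1).factorial : ℝ)⁻¹ * h ^ (j+1)) * iteratedDeriv (j+1) f x) *
            ∑ i ∈ Finset.Icc 1 k, ((-1 : ℝ) ^ (i - 1) / i * (k.choose i)) * (i : ℝ) ^ (j+1) := by
        rw [Finset.mul_sum]
        apply Finset.sum_congr rfl
        intro i _
        rw [hc i, mul_pow]
        ring
      rw [e1, sum_c_pow k (j+1) (by omega) (by omega)]
      rcases eq_or_ne j 0 with hj0 | hj0
      · subst hj0
        simp [iteratedDeriv_one, Nat.factorial]
      · simp [hj0, show j + 1 ≠ 1 by omega]
    rw [Finset.sum_congr rfl step2, Finset.sum_ite_eq' (Finset.range k) 0 (fun _ => h * deriv f x),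
      if_pos (Finset.mem_range.2 (by omega))]
  have heq : deriv f x - (1 / h) * ∑ i ∈ Finset.Icc 1 k, c i * (f (x + i * h) - f x)
      = -((1 / h) * ∑ i ∈ Finset.Icc 1 k, c i *
          (f (x + i * h) - ∑ j ∈ Finset.range (k + 1),
            ((j.factorial : ℝ)⁻¹ * ((i : ℝ) * h) ^ j) * iteratedDeriv j f x)) := by
    rw [hmain]
    field_simp
    ring
  rw [heq, abs_neg, abs_mul, abs_of_pos (by positivity : (0:ℝ) < 1 / h)]
  have habs : |∑ i ∈ Finset.Icc 1 k, c i *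
        (f (x + i * h) - ∑ j ∈ Finset.range (k + 1),
          ((j.factorial : ℝ)⁻¹ * ((i : ℝ) * h) ^ j) * iteratedDeriv j f x)|
      ≤ ∑ i ∈ Finset.Icc 1 k, |c i| * (M₀ * ((i : ℝ) * h) ^ (k + 1) / k.factorial) := by
    refine (Finset.abs_sum_le_sum_abs _ _).trans (Finset.sum_le_sum ?_)
    intro i hi
    rw [abs_mul]
    exact mul_le_mul_of_nonneg_left (hEbound i hi) (abs_nonneg _)
  calc (1 / h) * |∑ i ∈ Finset.Icc 1 k, c i *
        (f (x + i * h) - ∑ j ∈ Finset.range (k + 1),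
          ((j.factorial : ℝ)⁻¹ * ((i : ℝ) * h) ^ j) * iteratedDeriv j f x)|
      ≤ (1 / h) * ∑ i ∈ Finset.Icc 1 k, |c i| * (M₀ * ((i : ℝ) * h) ^ (k + 1) / k.factorial) :=
        mul_le_mul_of_nonneg_left habs (by positivity)
    _ = (∑ i ∈ Finset.Icc 1 k, |c i| * M₀ * (i : ℝ) ^ (k + 1) / k.factorial) * h ^ k := by
        rw [Finset.mul_sum, Finset.sum_mul]
        apply Finset.sum_congr rfl
        intro i _
        rw [mul_pow, pow_succ h k]
        field_simp
    _ ≤ C * h ^ k := by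
        apply mul_le_mul_of_nonneg_right _ (by positivity)
        rw [hCdef]
        linarith
end

section
/- Let m and n be positive integers and define c_0 = 0 and c_i = (-1)^{i-1}·C(n+m, i+m) / (i·C(n+m, m)) for i = -m, ..., -1, 1, ..., n. Then Σ_{i=-m}^n c_i·i = 1 and, for each j = 2, ..., n+m, Σ_{i=-m}^n c_i·i^j = 0. -/
open Finset Polynomial fwdDiff

lemma polyDiff (N : ℕ) : ∀ (p : Polynomial ℝ), p.degree < N → (fwdDiff (1:ℝ))^[N] (fun x => p.eval x) = 0 := by
  induction N with
  | zero =>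
    intro p hp
    have h0 : p = 0 := by
      rw [← Polynomial.degree_eq_bot]
      have : p.degree < (0 : WithBot ℕ) := by exact_mod_cast hp
      exact Nat.WithBot.lt_zero_iff.mp this
    subst h0
    ext x
    simp
  | succ N ih =>
    intro p hp
    rw [Function.iterate_succ_apply]
    have h1 : (fwdDiff (1:ℝ)) (fun x => p.eval x) = fun x => (p.comp (X + C 1) - p).eval x := by
      ext x; simp [fwdDiff, Polynomial.eval_comp]
    rw [h1]
    apply ih
    by_cases hp0 : p = 0
    · simp only [hp0, Polynomial.zero_comp, sub_zero, Polynomial.degree_zero]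
      exact WithBot.bot_lt_coe N
    · have hX : (X + C (1:ℝ)).natDegree = 1 := Polynomial.natDegree_X_add_C 1
      have hXm : (X + C (1:ℝ)).leadingCoeff = 1 := (Polynomial.monic_X_add_C 1)
      have hlc : (p.comp (X + C 1)).leadingCoeff = p.leadingCoeff := by
        rw [Polynomial.leadingCoeff_comp (by rw [hX]; norm_num), hXm, one_pow, mul_one]
      have hcne : p.comp (X + C 1) ≠ 0 := fun h => hp0 (by
        have := hlc; rw [h, Polynomial.leadingCoeff_zero] at this
        exact Polynomial.leadingCoeff_eq_zero.mp this.symm)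
      have hdc : (p.comp (X + C 1)).degree = p.degree := by
        rw [Polynomial.degree_eq_natDegree hcne, Polynomial.degree_eq_natDegree hp0,
          Polynomial.natDegree_comp, hX, mul_one]
      have hlt := Polynomial.degree_sub_lt hdc hcne hlc
      rw [hdc] at hlt
      have hle : p.degree ≤ (N : WithBot ℕ) := Order.lt_succ_iff.mp (by exact_mod_cast hp)
      exact lt_of_lt_of_le hlt hle

lemma altsum_s6 (N d : ℕ) (m : ℝ) (hd : d < N) :
    ∑ k ∈ range (N+1), (-1:ℝ)^k * (N.choose k) * ((k:ℝ) - m)^d = 0 := by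
  have hp : ((X - C m)^d : Polynomial ℝ).degree < N := by
    rw [Polynomial.degree_pow, Polynomial.degree_X_sub_C]
    simpa using (by exact_mod_cast hd : (d : WithBot ℕ) < N)
  have h0 := polyDiff N ((X - C m)^d) hp
  have h1 := fwdDiff_iter_eq_sum_shift (1:ℝ) (fun x => (((X - C m)^d : Polynomial ℝ)).eval x) N 0
  rw [h0] at h1
  simp only [Pi.zero_apply, Polynomial.eval_pow, Polynomial.eval_sub, Polynomial.eval_X,
    Polynomial.eval_C, zsmul_eq_mul, zero_add, nsmul_eq_mul, mul_one, Int.cast_mul,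
    Int.cast_pow, Int.cast_neg, Int.cast_one, Int.cast_natCast] at h1
  have h2 : ∑ k ∈ range (N+1), (-1:ℝ)^k * (N.choose k) * ((k:ℝ) - m)^d
      = (-1:ℝ)^N * ∑ k ∈ range (N+1), (-1:ℝ)^(N-k) * (N.choose k) * ((k:ℝ) - m)^d := by
    rw [Finset.mul_sum]
    refine Finset.sum_congr rfl fun k hk => ?_
    have hkN : k ≤ N := by simpa [Nat.lt_succ_iff] using hk
    have hpow : (-1:ℝ)^k = (-1:ℝ)^N * (-1:ℝ)^(N-k) := by
      rw [← pow_add]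
      have hkk : N + (N - k) = 2*(N-k) + k := by omega
      rw [hkk, pow_add, pow_mul]
      norm_num
    rw [hpow]; ring
  rw [h2, ← h1, mul_zero]

lemma key (m n : ℕ) (hm : 1 ≤ m) (hn : 1 ≤ n)
    (c : ℤ → ℝ) (hc0 : c 0 = 0)
    (hc : ∀ i : ℤ, -(m : ℤ) ≤ i → i ≤ n → i ≠ 0 →
      c i = (-1 : ℝ) ^ (i - 1) * ((n + m).choose (i + m).toNat) /
              (i * ((n + m).choose m)))
    (j : ℕ) (hj1 : 1 ≤ j) (hjN : j ≤ n + m) :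
    ∑ i ∈ Finset.Icc (-(m : ℤ)) n, c i * (i : ℝ) ^ j = if j = 1 then 1 else 0 := by
  have hch : ((n+m).choose m : ℝ) ≠ 0 :=
    Nat.cast_ne_zero.mpr (Nat.choose_pos (by omega)).ne'
  have hmap : Finset.Icc (-(m:ℤ)) (n:ℤ)
      = (Finset.range (n+m+1)).map ⟨fun k : ℕ => (k:ℤ) - m, (sub_left_injective (b := (m:ℤ))).comp Nat.cast_injective⟩ := by
    ext i
    simp only [Finset.mem_Icc, Finset.mem_map, Finset.mem_range, Function.Embedding.coeFn_mk]
    constructor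
    · rintro ⟨h1, h2⟩; exact ⟨(i + m).toNat, by omega, by omega⟩
    · rintro ⟨k, hk, rfl⟩; omega
  rw [hmap, Finset.sum_map]
  simp only [Function.Embedding.coeFn_mk, Int.cast_sub, Int.cast_natCast]
  have hmem : m ∈ Finset.range (n+m+1) := by simp
  rw [← Finset.add_sum_erase _ _ hmem]
  have hzero : c ((m:ℤ) - m) * ((m:ℝ) - m)^j = 0 := by
    simp [hc0]
  rw [hzero, zero_add]
  -- the erased alternating sum
  have hT := altsum_s6 (n+m) (j-1) m (by omega)
  rw [← Finset.add_sum_erase _ _ hmem] at hT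
  have hU : ∑ k ∈ (Finset.range (n+m+1)).erase m,
      (-1:ℝ)^k * ((n+m).choose k) * ((k:ℝ) - m)^(j-1)
      = -((-1:ℝ)^m * ((n+m).choose m) * (0:ℝ)^(j-1)) := by
    have : ((m:ℝ) - m) = 0 := by ring
    rw [this] at hT
    linarith
  have hterm : ∀ k ∈ (Finset.range (n+m+1)).erase m,
      c ((k:ℤ) - m) * ((k:ℝ) - m)^j
      = ((-1:ℝ)^(m+1) / ((n+m).choose m)) *
        ((-1:ℝ)^k * ((n+m).choose k) * ((k:ℝ) - m)^(j-1)) := by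
    intro k hk
    rw [Finset.mem_erase, Finset.mem_range] at hk
    obtain ⟨hkm, hklt⟩ := hk
    have hx : ((k:ℝ) - m) ≠ 0 := sub_ne_zero.mpr (by exact_mod_cast hkm)
    rw [hc ((k:ℤ) - m) (by omega) (by omega) (by omega)]
    have htn : (((k:ℤ) - m + m).toNat) = k := by omega
    rw [htn]
    have he : (k:ℤ) - m - 1 = ((k + m + 1 : ℕ) : ℤ) - ((2*(m+1) : ℕ) : ℤ) := by
      push_cast; ring
    rw [he, zpow_sub₀ (by norm_num : (-1:ℝ) ≠ 0), zpow_natCast, zpow_natCast]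
    have h2m : (-1:ℝ)^(2*(m+1)) = 1 := by rw [pow_mul]; norm_num
    rw [h2m, div_one]
    obtain ⟨j', rfl⟩ : ∃ j', j = j' + 1 := ⟨j - 1, by omega⟩
    simp only [Nat.add_sub_cancel]
    push_cast
    rw [pow_succ ((k:ℝ) - m) j', pow_add, pow_add]
    field_simp
    ring
  rw [Finset.sum_congr rfl hterm, ← Finset.mul_sum, hU]
  by_cases hj : j = 1
  · subst hj
    simp only [if_true, Nat.sub_self, pow_zero, mul_one]
    field_simp
    rw [pow_succ]
    ring_nf
    have h12 : (-1:ℝ)^(m*2) = 1 := by rw [mul_comm, pow_mul]; norm_num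
    rw [h12]
  · rw [if_neg hj]
    have : (0:ℝ)^(j-1) = 0 := zero_pow (by omega)
    rw [this]
    ring

theorem centered_diff_moments (m n : ℕ) (hm : 1 ≤ m) (hn : 1 ≤ n)
    (c : ℤ → ℝ) (hc0 : c 0 = 0)
    (hc : ∀ i : ℤ, -(m : ℤ) ≤ i → i ≤ n → i ≠ 0 →
      c i = (-1 : ℝ) ^ (i - 1) * ((n + m).choose (i + m).toNat) /
              (i * ((n + m).choose m))) :
    (∑ i ∈ Finset.Icc (-(m : ℤ)) n, c i * i = 1) ∧
    (∀ j, 2 ≤ j → j ≤ n + m →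
      ∑ i ∈ Finset.Icc (-(m : ℤ)) n, c i * (i : ℝ) ^ j = 0) := by
  constructor
  · have h := key m n hm hn c hc0 hc 1 le_rfl (by omega)
    simpa [pow_one] using h
  · intro j hj2 hjN
    have h := key m n hm hn c hc0 hc j (by omega) hjN
    rw [if_neg (by omega)] at h
    exact h
end

section
/- Let m and n be positive integers and f a C^{n+m+1} function. Then f'(x) = (1/h)·Σ_{i=-m}^n c_i·[f(x+ih) - f(x)] + O(h^{n+m}), where c_0 = 0 and c_i = (-1)^{i-1}·C(n+m, i+m) / (i·C(n+m, m)) for i ≠ 0. -/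
open Finset fwdDiff

lemma lemA : ∀ k : ℕ, ∀ N : ℕ, k < N → ∀ a : ℝ,
    (fwdDiff (1:ℝ))^[N] (fun t : ℝ => (t + a) ^ k) = 0 := by
  intro k
  induction k using Nat.strong_induction_on with
  | _ k IH =>
    intro N hkN a
    obtain ⟨N', rfl⟩ := Nat.exists_eq_succ_of_ne_zero (by omega : N ≠ 0)
    have hstep : fwdDiff (1:ℝ) (fun t : ℝ => (t + a) ^ k)
        = ∑ r ∈ Finset.range k, (k.choose r : ℝ) • (fun t : ℝ => (t + a) ^ r) := by
      funext t
      simp only [fwdDiff, Finset.sum_apply, Pi.smul_apply, smul_eq_mul]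
      have h1 : t + 1 + a = (t + a) + 1 := by ring
      rw [h1, add_pow, Finset.sum_range_succ]
      simp [mul_comm]
    rw [Function.iterate_succ_apply, hstep, fwdDiff_iter_finset_sum]
    refine Finset.sum_eq_zero fun r hr => ?_
    rw [fwdDiff_iter_const_smul,
      IH r (Finset.mem_range.mp hr)
        N' (lt_of_lt_of_le (Finset.mem_range.mp hr) (Nat.lt_succ_iff.mp hkN)) a,
      smul_zero]

lemma lemB (N k : ℕ) (hk : k < N) (a : ℝ) :
    ∑ j ∈ Finset.range (N + 1), (-1 : ℝ) ^ j * (N.choose j : ℝ) * ((j : ℝ) + a) ^ k = 0 := by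
  have h0 := fwdDiff_iter_eq_sum_shift (1:ℝ) (fun t : ℝ => (t + a) ^ k) N 0
  rw [lemA k N hk a] at h0
  simp only [Pi.zero_apply, zsmul_eq_mul] at h0
  have key : ∑ j ∈ Finset.range (N + 1),
      (((-1:ℤ) ^ (N - j) * (N.choose j) : ℤ) : ℝ) * ((0 : ℝ) + j • (1:ℝ) + a) ^ k
      = (-1 : ℝ) ^ N * ∑ j ∈ Finset.range (N + 1),
        (-1 : ℝ) ^ j * (N.choose j : ℝ) * ((j : ℝ) + a) ^ k := by
    rw [Finset.mul_sum]
    refine Finset.sum_congr rfl fun j hj => ?_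
    have hj' : j ≤ N := Nat.lt_succ_iff.mp (Finset.mem_range.mp hj)
    have hsm : (0 : ℝ) + j • (1:ℝ) + a = (j : ℝ) + a := by simp
    have hNeq : (-1:ℝ) ^ (N - j) * (-1:ℝ) ^ j = (-1:ℝ) ^ N := by
      rw [← pow_add, Nat.sub_add_cancel hj']
    have h2 : (-1:ℝ) ^ j * (-1:ℝ) ^ j = 1 := by
      rw [← pow_add, ← two_mul, pow_mul]; norm_num
    rw [hsm]
    push_cast
    calc (-1:ℝ) ^ (N - j) * (N.choose j : ℝ) * ((j : ℝ) + a) ^ k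
        = ((-1:ℝ) ^ (N-j) * (-1)^j) * ((-1)^j * (N.choose j : ℝ) * ((j : ℝ) + a) ^ k) := by
          linear_combination (-((-1:ℝ)^(N-j) * (N.choose j : ℝ) * ((j:ℝ)+a)^k)) * h2
      _ = (-1:ℝ) ^ N * ((-1)^j * (N.choose j : ℝ) * ((j : ℝ) + a) ^ k) := by rw [hNeq]
  rw [key] at h0
  have hne : (-1:ℝ) ^ N ≠ 0 := by positivity
  exact (mul_eq_zero.mp h0.symm).resolve_left hne

lemma lemC (m n : ℕ) (hm : 1 ≤ m) (hn : 1 ≤ n) (c : ℤ → ℝ) (hc0 : c 0 = 0)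
    (hc : ∀ i : ℤ, -(m : ℤ) ≤ i → i ≤ n → i ≠ 0 →
      c i = (-1 : ℝ) ^ (i - 1) * ((n + m).choose (i + m).toNat) /
              (i * ((n + m).choose m)))
    (k : ℕ) (hk1 : 1 ≤ k) (hkN : k ≤ n + m) :
    ∑ i ∈ Finset.Icc (-(m : ℤ)) (n : ℤ), c i * (i : ℝ) ^ k
      = if k = 1 then 1 else 0 := by
  set N := n + m with hN
  have hCM : ((N.choose m : ℝ)) ≠ 0 := by
    exact_mod_cast (Nat.choose_pos (by omega : m ≤ N)).ne'
  -- reindex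
  have hre : ∑ i ∈ Finset.Icc (-(m : ℤ)) (n : ℤ), c i * (i : ℝ) ^ k
      = ∑ j ∈ Finset.range (N + 1), c ((j : ℤ) - m) * ((j : ℝ) - m) ^ k := by
    refine Finset.sum_nbij' (fun i => (i + m).toNat) (fun j => (j : ℤ) - m) ?_ ?_ ?_ ?_ ?_
    · intro i hi
      simp only [Finset.mem_Icc] at hi
      simp only [Finset.mem_range]
      omega
    · intro j hj
      simp only [Finset.mem_range] at hj
      simp only [Finset.mem_Icc]
      omega
    · intro i hi; simp only [Finset.mem_Icc] at hi; omega
    · intro j hj; simp only [Finset.mem_range] at hj; omega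
    · intro i hi
      simp only [Finset.mem_Icc] at hi
      have h1 : (((i + m).toNat : ℤ)) = i + m := Int.toNat_of_nonneg (by omega)
      have h2 : (((i + m).toNat : ℤ)) - m = i := by omega
      rw [h2]
      have h3 : (((i + m).toNat : ℝ)) - m = (i : ℝ) := by
        have := congrArg (fun z : ℤ => (z : ℝ)) h2
        push_cast at this ⊢
        linarith [this]
      rw [h3]
  rw [hre]
  -- termwise description
  have hterm : ∀ j ∈ Finset.range (N + 1),
      c ((j : ℤ) - m) * ((j : ℝ) - m) ^ k
        = if j = m then 0 else
            ((-1 : ℝ) ^ (m + 1) / (N.choose m : ℝ)) *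
              ((-1 : ℝ) ^ j * (N.choose j : ℝ) * ((j : ℝ) - m) ^ (k - 1)) := by
    intro j hj
    simp only [Finset.mem_range] at hj
    by_cases hjm : j = m
    · subst hjm
      simp [hc0, zero_pow (by omega : k ≠ 0)]
    · have hi0 : ((j : ℤ) - m) ≠ 0 := by omega
      have hci := hc ((j : ℤ) - m) (by omega) (by omega) hi0
      have htn : (((j : ℤ) - m) + m).toNat = j := by omega
      rw [htn] at hci
      have hzp : (-1 : ℝ) ^ (((j : ℤ) - m) - 1) = (-1 : ℝ) ^ j * (-1 : ℝ) ^ (m + 1) := by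
        have he : ((j : ℤ) - m) - 1 = (j : ℤ) - ((m + 1 : ℕ) : ℤ) := by push_cast; ring
        rw [he, zpow_sub₀ (by norm_num : (-1:ℝ) ≠ 0), zpow_natCast, zpow_natCast]
        rw [div_eq_mul_inv, ← inv_pow]
        norm_num
      rw [hci, hzp]
      have hiR : ((j : ℝ) - m) ≠ 0 := by
        intro hcon
        apply hjm
        have : (j : ℝ) = m := by linarith
        exact_mod_cast this
      have hpk : ((j : ℝ) - m) ^ k = ((j : ℝ) - m) * ((j : ℝ) - m) ^ (k - 1) := by
        conv_lhs => rw [show k = (k - 1) + 1 by omega]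
        rw [pow_succ]
        ring
      rw [if_neg hjm]
      push_cast
      rw [hpk]
      field_simp
  rw [Finset.sum_congr rfl hterm]
  set q : ℝ := (-1 : ℝ) ^ (m + 1) / (N.choose m : ℝ) with hq
  set B : ℕ → ℝ := fun x => (-1 : ℝ) ^ x * (N.choose x : ℝ) * ((x : ℝ) - m) ^ (k - 1) with hB
  have hsp : ∀ x ∈ Finset.range (N + 1),
      (if x = m then (0:ℝ) else q * B x) = q * B x - (if x = m then q * B m else 0) := by
    intro x _
    by_cases hx : x = m <;> simp [hx]
  rw [Finset.sum_congr rfl hsp, Finset.sum_sub_distrib, Finset.sum_ite_eq' (Finset.range (N+1)) m]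
  have hmmem : m ∈ Finset.range (N + 1) := Finset.mem_range.mpr (by omega)
  rw [if_pos hmmem, ← Finset.mul_sum]
  have hS : ∑ x ∈ Finset.range (N + 1), B x = 0 := by
    have := lemB N (k - 1) (by omega) (-(m : ℝ))
    simpa [hB, sub_eq_add_neg] using this
  rw [hS, mul_zero, zero_sub]
  have hodd : (-1:ℝ) ^ (m + 1) * (-1:ℝ) ^ m = -1 := by
    rw [← pow_add]
    exact Odd.neg_one_pow ⟨m, by ring⟩
  by_cases hk : k = 1
  · rw [if_pos hk]
    have hBm : B m = (-1 : ℝ) ^ m * (N.choose m : ℝ) := by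
      simp [hB, hk]
    rw [hBm, hq]
    calc -((-1:ℝ) ^ (m+1) / (N.choose m : ℝ) * ((-1:ℝ) ^ m * (N.choose m : ℝ)))
        = -(((-1:ℝ) ^ (m+1) * (-1:ℝ) ^ m) * ((N.choose m : ℝ) / (N.choose m : ℝ))) := by ring
      _ = 1 := by rw [hodd, div_self hCM]; norm_num
  · rw [if_neg hk]
    have hBm : B m = 0 := by
      simp [hB, zero_pow (by omega : k - 1 ≠ 0)]
    rw [hBm, mul_zero, neg_zero]

lemma lemD {K : ℕ} {g : ℝ → ℝ} (hg : ContDiff ℝ (K : ℕ∞) g) {k : ℕ} (hk : k ≤ K)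
    {s : Set ℝ} (hs : UniqueDiffOn ℝ s) {y : ℝ} (hy : y ∈ s) :
    iteratedDerivWithin k g s y = iteratedDeriv k g y := by
  rw [iteratedDerivWithin_eq_iteratedFDerivWithin, iteratedDeriv_eq_iteratedFDeriv]
  have h1 : HasFTaylorSeriesUpTo (K : ℕ∞) g (ftaylorSeries ℝ g) :=
    contDiff_iff_ftaylorSeries.mp hg
  have h2 : HasFTaylorSeriesUpToOn (K : ℕ∞) g (ftaylorSeries ℝ g) s :=
    (hasFTaylorSeriesUpToOn_univ_iff.mpr h1).mono (Set.subset_univ s)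
  have h3 := h2.eq_iteratedFDerivWithin_of_uniqueDiffOn (by exact_mod_cast hk) hs hy
  rw [← h3]
  rfl

lemma lemE (K : ℕ) {f : ℝ → ℝ} (hf : ContDiff ℝ (K : ℕ∞) f) (x : ℝ) (ci : ℝ) (k : ℕ)
    (hk : k ≤ K) :
    iteratedDeriv k (fun t : ℝ => f (x + ci * t)) 0 = ci ^ k * iteratedDeriv k f x := by
  have hF : ContDiff ℝ (k : ℕ∞) (fun s : ℝ => f (x + s)) :=
    (hf.comp (contDiff_const.add contDiff_id)).of_le (by exact_mod_cast hk)
  have h1 : (fun t : ℝ => f (x + ci * t)) = (fun t : ℝ => (fun s => f (x + s)) (ci * t)) := rfl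
  rw [h1, iteratedDeriv_comp_const_mul hF ci]
  rw [iteratedDeriv_comp_const_add k f x]
  norm_num

theorem centered_difference_order (m n : ℕ) (hm : 1 ≤ m) (hn : 1 ≤ n)
    (f : ℝ → ℝ) (hf : ContDiff ℝ (n + m + 1) f)
    (c : ℤ → ℝ) (hc0 : c 0 = 0)
    (hc : ∀ i : ℤ, -(m : ℤ) ≤ i → i ≤ n → i ≠ 0 →
      c i = (-1 : ℝ) ^ (i - 1) * ((n + m).choose (i + m).toNat) /
              (i * ((n + m).choose m))) (x : ℝ) :
    ∃ C > 0, ∃ h₀ > 0, ∀ h : ℝ, 0 < h → h ≤ h₀ →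
      |deriv f x - (1 / h) * ∑ i ∈ Finset.Icc (-(m : ℤ)) n,
          c i * (f (x + i * h) - f x)| ≤ C * h ^ (n + m) := by
  classical
  set N := n + m with hNdef
  have hfN : ContDiff ℝ ((N + 1 : ℕ) : ℕ∞) f := by exact_mod_cast hf
  have hgi : ∀ i : ℤ, ContDiff ℝ ((N + 1 : ℕ) : ℕ∞) (fun t : ℝ => f (x + (i : ℝ) * t)) := by
    intro i
    exact hfN.comp (contDiff_const.add (contDiff_const.mul contDiff_id))
  set T : ℤ → ℝ → ℝ := fun i h =>
    taylorWithinEval (fun t : ℝ => f (x + (i : ℝ) * t)) N (Set.Icc 0 1) 0 h with hTdef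
  have hTay : ∀ i : ℤ, ∃ Ci : ℝ, ∀ h ∈ Set.Icc (0:ℝ) 1,
      |f (x + (i : ℝ) * h) - T i h| ≤ Ci * h ^ (N + 1) := by
    intro i
    have hco : ContDiffOn ℝ ((N : ℕ∞) + 1) (fun t : ℝ => f (x + (i : ℝ) * t)) (Set.Icc 0 1) := by
      exact_mod_cast (hgi i).contDiffOn
    obtain ⟨Ci, hCi⟩ := exists_taylor_mean_remainder_bound (by norm_num : (0:ℝ) ≤ 1) hco
    refine ⟨Ci, fun h hh => ?_⟩
    have := hCi h hh
    simpa [hTdef] using this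
  choose Cf hCf using hTay
  set CB : ℝ := ∑ i ∈ Finset.Icc (-(m : ℤ)) (n : ℤ), |c i| * max (Cf i) 0 with hCB
  have hCBnn : 0 ≤ CB :=
    Finset.sum_nonneg fun i _ => mul_nonneg (abs_nonneg _) (le_max_right _ _)
  refine ⟨CB + 1, by positivity, 1, one_pos, fun h hh0 hh1 => ?_⟩
  have hhmem : h ∈ Set.Icc (0:ℝ) 1 := ⟨hh0.le, hh1⟩
  set D : ℕ → ℝ := fun k => iteratedDeriv k f x with hD
  -- Taylor polynomial explicit form
  have hT : ∀ i : ℤ, T i h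
      = ∑ k ∈ Finset.range (N + 1), ((Nat.factorial k : ℝ)⁻¹ * h ^ k) * ((i : ℝ) ^ k * D k) := by
    intro i
    show taylorWithinEval (fun t : ℝ => f (x + (i : ℝ) * t)) N (Set.Icc 0 1) 0 h = _
    rw [taylor_within_apply]
    refine Finset.sum_congr rfl fun k hk => ?_
    have hk' : k ≤ N + 1 := by have := Finset.mem_range.mp hk; omega
    rw [lemD (hgi i) hk' (uniqueDiffOn_Icc one_pos) (Set.left_mem_Icc.mpr zero_le_one)]
    rw [lemE (N + 1) hfN x (i : ℝ) k hk']
    simp [smul_eq_mul]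
    exact Or.inl (Or.inl rfl)
  -- key moment identity
  have hkey : ∑ i ∈ Finset.Icc (-(m : ℤ)) (n : ℤ), c i * (T i h - f x) = h * deriv f x := by
    have hin : ∀ i : ℤ, T i h - f x
        = ∑ k ∈ Finset.range N, ((Nat.factorial (k+1) : ℝ)⁻¹ * h ^ (k+1)) * ((i : ℝ) ^ (k+1) * D (k+1)) := by
      intro i
      rw [hT i, Finset.sum_range_succ']
      have h0 : ((Nat.factorial 0 : ℝ)⁻¹ * h ^ 0) * ((i : ℝ) ^ 0 * D 0) = f x := by
        simp [hD, iteratedDeriv_zero]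
      rw [h0]
      ring
    calc ∑ i ∈ Finset.Icc (-(m : ℤ)) (n : ℤ), c i * (T i h - f x)
        = ∑ i ∈ Finset.Icc (-(m : ℤ)) (n : ℤ), ∑ k ∈ Finset.range N,
            c i * (((Nat.factorial (k+1) : ℝ)⁻¹ * h ^ (k+1)) * ((i : ℝ) ^ (k+1) * D (k+1))) := by
          refine Finset.sum_congr rfl fun i _ => ?_
          rw [hin i, Finset.mul_sum]
      _ = ∑ k ∈ Finset.range N, ∑ i ∈ Finset.Icc (-(m : ℤ)) (n : ℤ),
            c i * (((Nat.factorial (k+1) : ℝ)⁻¹ * h ^ (k+1)) * ((i : ℝ) ^ (k+1) * D (k+1))) :=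
          Finset.sum_comm
      _ = ∑ k ∈ Finset.range N, (((Nat.factorial (k+1) : ℝ)⁻¹ * h ^ (k+1)) * D (k+1)) *
            ∑ i ∈ Finset.Icc (-(m : ℤ)) (n : ℤ), c i * (i : ℝ) ^ (k+1) := by
          refine Finset.sum_congr rfl fun k _ => ?_
          rw [Finset.mul_sum]
          refine Finset.sum_congr rfl fun i _ => ?_
          ring
      _ = ∑ k ∈ Finset.range N, (((Nat.factorial (k+1) : ℝ)⁻¹ * h ^ (k+1)) * D (k+1)) *
            (if k + 1 = 1 then 1 else 0) := by
          refine Finset.sum_congr rfl fun k hk => ?_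
          rw [lemC m n hm hn c hc0 hc (k+1) (by omega)
            (by have := Finset.mem_range.mp hk; omega)]
      _ = h * deriv f x := by
          have : ∀ k ∈ Finset.range N,
              (((Nat.factorial (k+1) : ℝ)⁻¹ * h ^ (k+1)) * D (k+1)) * (if k + 1 = 1 then 1 else 0)
              = if k = 0 then h * deriv f x else 0 := by
            intro k _
            by_cases hk0 : k = 0
            · subst hk0
              simp [hD, iteratedDeriv_one]
            · simp [hk0]
          rw [Finset.sum_congr rfl this, Finset.sum_ite_eq' (Finset.range N) 0
            (fun _ => h * deriv f x)]
          rw [if_pos (Finset.mem_range.mpr (by omega))]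
  -- final estimate
  have hsplit : ∑ i ∈ Finset.Icc (-(m : ℤ)) (n : ℤ), c i * (f (x + (i : ℝ) * h) - f x)
      = h * deriv f x + ∑ i ∈ Finset.Icc (-(m : ℤ)) (n : ℤ),
          c i * (f (x + (i : ℝ) * h) - T i h) := by
    rw [← hkey, ← Finset.sum_add_distrib]
    refine Finset.sum_congr rfl fun i _ => ?_
    ring
  have hhne : h ≠ 0 := hh0.ne'
  have hmain : deriv f x - (1 / h) * ∑ i ∈ Finset.Icc (-(m : ℤ)) (n : ℤ),
      c i * (f (x + (i : ℝ) * h) - f x)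
      = -(1 / h) * ∑ i ∈ Finset.Icc (-(m : ℤ)) (n : ℤ),
          c i * (f (x + (i : ℝ) * h) - T i h) := by
    rw [hsplit]
    field_simp
    ring
  rw [hmain]
  rw [abs_mul, abs_neg, abs_of_pos (by positivity : (0:ℝ) < 1 / h)]
  have hRb : |∑ i ∈ Finset.Icc (-(m : ℤ)) (n : ℤ), c i * (f (x + (i : ℝ) * h) - T i h)|
      ≤ CB * h ^ (N + 1) := by
    refine (Finset.abs_sum_le_sum_abs _ _).trans ?_
    rw [hCB, Finset.sum_mul]
    refine Finset.sum_le_sum fun i _ => ?_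
    rw [abs_mul]
    have h1 : |f (x + (i : ℝ) * h) - T i h| ≤ max (Cf i) 0 * h ^ (N + 1) := by
      refine (hCf i h hhmem).trans ?_
      have : (0:ℝ) ≤ h ^ (N+1) := by positivity
      exact mul_le_mul_of_nonneg_right (le_max_left _ _) this
    calc |c i| * |f (x + (i : ℝ) * h) - T i h| ≤ |c i| * (max (Cf i) 0 * h ^ (N + 1)) :=
          mul_le_mul_of_nonneg_left h1 (abs_nonneg _)
      _ = |c i| * max (Cf i) 0 * h ^ (N + 1) := by ring
  calc (1 / h) * |∑ i ∈ Finset.Icc (-(m : ℤ)) (n : ℤ), c i * (f (x + (i : ℝ) * h) - T i h)|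
      ≤ (1 / h) * (CB * h ^ (N + 1)) := by
        exact mul_le_mul_of_nonneg_left hRb (by positivity)
    _ = CB * h ^ N := by field_simp; ring
    _ ≤ (CB + 1) * h ^ N := by
        have : (0:ℝ) ≤ h ^ N := by positivity
        nlinarith
end

section
/- For any real number r and positive integer p, and for each k = 1, 2, ..., p, Σ_{i=0}^p (r+i)^k · C(-r, i) · C(r+p, p-i) = 0. -/
open Finset

/-- Generalized binomial coefficient `C(r, k)` for real `r`. -/
noncomputable def genChoose (r : ℝ) (k : ℕ) : ℝ :=
  (∏ j ∈ Finset.range k, (r - j)) / (k.factorial : ℝ)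

lemma fwdDiff_pow_eq_zero : ∀ m p : ℕ, m < p →
    (fwdDiff (1 : ℝ))^[p] (fun x : ℝ ↦ x ^ m) = fun _ ↦ (0 : ℝ) := by
  intro m
  induction m using Nat.strong_induction_on with
  | _ m ih =>
    intro p hp
    obtain ⟨q, rfl⟩ : ∃ q, p = q + 1 := ⟨p - 1, by omega⟩
    have hstep : fwdDiff (1 : ℝ) (fun x : ℝ ↦ x ^ m)
        = fun x : ℝ ↦ ∑ j ∈ range m, (m.choose j : ℝ) * x ^ j := by
      funext x
      simp only [fwdDiff]
      rw [add_pow]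
      rw [Finset.sum_range_succ]
      simp [mul_comm]
    funext x
    rw [Function.iterate_succ_apply, hstep]
    have : (fun x : ℝ ↦ ∑ j ∈ range m, (m.choose j : ℝ) * x ^ j)
        = ∑ j ∈ range m, (fun x : ℝ ↦ (m.choose j : ℝ) • x ^ j) := by
      funext y; simp
    rw [this, fwdDiff_iter_finset_sum]
    have hz : ∀ j ∈ range m, (fwdDiff (1:ℝ))^[q] (fun x : ℝ ↦ (m.choose j : ℝ) • x ^ j) x = 0 := by
      intro j hj
      have hj' : j < m := mem_range.mp hj
      have : (fun x : ℝ ↦ (m.choose j : ℝ) • x ^ j)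
          = (m.choose j : ℝ) • (fun x : ℝ ↦ x ^ j) := by funext y; simp
      rw [this, fwdDiff_iter_const_smul, Pi.smul_apply, ih j hj' q (by omega)]
      simp
    simp only [Finset.sum_apply]
    rw [Finset.sum_congr rfl hz]
    simp

lemma alt_sum (p m : ℕ) (h : m < p) (r : ℝ) :
    ∑ i ∈ Finset.range (p + 1), (-1 : ℝ) ^ i * (p.choose i : ℝ) * (r + i) ^ m = 0 := by
  have key := fwdDiff_iter_eq_sum_shift (1 : ℝ) (fun x : ℝ ↦ x ^ m) p r
  rw [fwdDiff_pow_eq_zero m p h] at key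
  have key2 : (0 : ℝ) = ∑ k ∈ range (p + 1),
      ((-1 : ℝ) ^ (p - k) * (p.choose k : ℝ)) * (r + k) ^ m := by
    simpa [zsmul_eq_mul, mul_assoc] using key
  have hsign : ∀ k ∈ range (p + 1),
      ((-1 : ℝ) ^ (p - k) * (p.choose k : ℝ)) * (r + k) ^ m
      = (-1 : ℝ) ^ p * ((-1 : ℝ) ^ k * (p.choose k : ℝ) * (r + k) ^ m) := by
    intro k hk
    have hk' : k ≤ p := by simpa [Nat.lt_succ_iff] using mem_range.mp hk
    have : (-1 : ℝ) ^ (p - k) * (-1 : ℝ) ^ k = (-1 : ℝ) ^ p := by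
      rw [← pow_add]; congr 1; omega
    have h2 : (-1 : ℝ) ^ (p - k) = (-1 : ℝ) ^ p * (-1 : ℝ) ^ k := by
      have hsq : ((-1 : ℝ) ^ k) * ((-1:ℝ)^k) = 1 := by
        rw [← pow_add, Even.neg_one_pow ⟨k, rfl⟩]
      calc (-1 : ℝ) ^ (p - k) = (-1 : ℝ) ^ (p-k) * ((-1:ℝ)^k * (-1:ℝ)^k) := by rw [hsq, mul_one]
        _ = (-1:ℝ)^p * (-1:ℝ)^k := by rw [← mul_assoc, this]
    rw [h2]; ring
  rw [Finset.sum_congr rfl hsign, ← Finset.mul_sum] at key2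
  have hne : ((-1 : ℝ) ^ p) ≠ 0 := by positivity
  exact (mul_eq_zero.mp key2.symm).resolve_left hne

lemma prod_shift (r : ℝ) (p i : ℕ) (hi : i ≤ p) :
    ∏ j ∈ Finset.range (p - i), (r + (p : ℝ) - (j : ℕ))
      = ∏ j ∈ Finset.range (p - i), (r + ((i + 1 + j : ℕ) : ℝ)) := by
  rw [← Finset.prod_range_reflect (fun j => r + (p : ℝ) - (j : ℕ)) (p - i)]
  apply Finset.prod_congr rfl
  intro j hj
  have hj' : j < p - i := mem_range.mp hj
  have h1 : p - i - 1 - j + (i + 1 + j) = p := by omega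
  have : ((p - i - 1 - j : ℕ) : ℝ) = (p : ℝ) - ((i + 1 + j : ℕ) : ℝ) := by
    have := congrArg (fun n : ℕ => (n : ℝ)) h1
    push_cast at this ⊢
    linarith
  rw [this]; ring

lemma term_eq (r : ℝ) (p i k : ℕ) (hi : i ≤ p) (hk : 1 ≤ k) :
    (r + i) ^ k * genChoose (-r) i * genChoose (r + p) (p - i)
      = ((∏ j ∈ Finset.range (p + 1), (r + (j : ℕ))) / (p.factorial : ℝ))
        * ((-1 : ℝ) ^ i * (p.choose i : ℝ) * (r + i) ^ (k - 1)) := by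
  have hnum1 : ∏ j ∈ Finset.range i, (-r - (j : ℕ))
      = (-1 : ℝ) ^ i * ∏ j ∈ Finset.range i, (r + (j : ℕ)) := by
    have hh : ∀ j ∈ Finset.range i, -r - (j : ℝ) = (-1) * (r + (j : ℕ)) := by
      intro j _; ring
    rw [Finset.prod_congr rfl hh, Finset.prod_mul_distrib, Finset.prod_const, Finset.card_range]
  have hsplit : ∏ j ∈ Finset.range (p + 1), (r + (j : ℕ))
      = (∏ j ∈ Finset.range i, (r + (j : ℕ))) * (r + i)
        * ∏ j ∈ Finset.range (p - i), (r + ((i + 1 + j : ℕ) : ℝ)) := by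
    have h1 : p + 1 = (i + 1) + (p - i) := by omega
    rw [h1, Finset.prod_range_add, Finset.prod_range_succ]
  have hfac : ((p.choose i : ℝ)) * (i.factorial : ℝ) * ((p - i).factorial : ℝ)
      = (p.factorial : ℝ) := by
    exact_mod_cast congrArg (fun n : ℕ => (n : ℝ)) (Nat.choose_mul_factorial_mul_factorial hi)
  have hik : (r + i) ^ k = (r + i) ^ (k - 1) * (r + i) := by
    rw [← pow_succ]; congr 1; omega
  have hifz : (i.factorial : ℝ) ≠ 0 := by exact_mod_cast i.factorial_ne_zero
  have hpfz : (p.factorial : ℝ) ≠ 0 := by exact_mod_cast p.factorial_ne_zero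
  have hpiz : ((p - i).factorial : ℝ) ≠ 0 := by exact_mod_cast (p - i).factorial_ne_zero
  unfold genChoose
  rw [hnum1, prod_shift r p i hi, hsplit, hik]
  field_simp
  linear_combination (-((r + (i : ℝ)) ^ (k - 1) * (r + (i : ℝ)) *
      (∏ j ∈ Finset.range i, (r + (j : ℕ))) *
      (∏ x ∈ Finset.range (p - i), (r + ((i + 1 + x : ℕ) : ℝ))))) * hfac

theorem fractional_zero_sum (r : ℝ) (p : ℕ) (hp : 1 ≤ p)
    (k : ℕ) (hk1 : 1 ≤ k) (hk2 : k ≤ p) :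
    ∑ i ∈ Finset.range (p + 1),
      (r + i) ^ k * genChoose (-r) i * genChoose (r + p) (p - i) = 0 := by
  have hterm : ∀ i ∈ Finset.range (p + 1),
      (r + i) ^ k * genChoose (-r) i * genChoose (r + p) (p - i)
      = ((∏ j ∈ Finset.range (p + 1), (r + (j : ℕ))) / (p.factorial : ℝ))
        * ((-1 : ℝ) ^ i * (p.choose i : ℝ) * (r + i) ^ (k - 1)) := by
    intro i hi
    exact term_eq r p i k (by simpa [Nat.lt_succ_iff] using Finset.mem_range.mp hi) hk1
  rw [Finset.sum_congr rfl hterm, ← Finset.mul_sum, alt_sum p (k - 1) (by omega) r, mul_zero]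
end

section
/- For any real numbers r and λ, positive integer p, and each k = 1, 2, ..., p, the polynomial identity Σ_{i=0}^p (r+i)^k · C(-r+λ, i) · C(r+p-λ, p-i) = λ^k holds. -/
lemma descPoch_prod (r : ℝ) (k : ℕ) :
    (descPochhammer ℤ k).smeval r = ∏ j ∈ Finset.range k, (r - j) := by
  induction k with
  | zero => simp [descPochhammer_zero, Polynomial.smeval_one]
  | succ n ih =>
    rw [descPochhammer_succ_right, Polynomial.smeval_mul, ih, Finset.prod_range_succ]
    simp [Polynomial.smeval_sub, Polynomial.smeval_X, Polynomial.smeval_natCast]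

lemma genChoose_eq_ringChoose (r : ℝ) (k : ℕ) : genChoose r k = Ring.choose r k := by
  have h := Ring.descPochhammer_eq_factorial_smul_choose (R := ℝ) r k
  rw [descPoch_prod] at h
  rw [genChoose, h, nsmul_eq_mul]
  have : (k.factorial : ℝ) ≠ 0 := Nat.cast_ne_zero.mpr k.factorial_ne_zero
  field_simp

lemma genChoose_vandermonde (x y : ℝ) (n : ℕ) :
    ∑ i ∈ Finset.range (n + 1), genChoose x i * genChoose y (n - i) = genChoose (x + y) n := by
  simp only [genChoose_eq_ringChoose]
  rw [Ring.add_choose_eq n (Commute.all x y), Finset.Nat.sum_antidiagonal_eq_sum_range_succ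
    (fun a b => Ring.choose x a * Ring.choose y b)]

lemma sub_mul_genChoose (x : ℝ) (i : ℕ) :
    (x - i) * genChoose x i = x * genChoose (x - 1) i := by
  unfold genChoose
  rw [← mul_div_assoc, ← mul_div_assoc]
  congr 1
  rw [mul_comm, ← Finset.prod_range_succ (fun t => x - t) i,
    Finset.prod_range_succ' (fun t => x - t) i]
  simp only [Nat.cast_zero, sub_zero]
  rw [mul_comm]
  congr 1
  exact Finset.prod_congr rfl fun t _ => by push_cast; ring

lemma key_s10 (k : ℕ) : ∀ (d n : ℕ) (r lam : ℝ), k + d ≤ n →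
    ∑ i ∈ Finset.range (n + 1),
      (r + i) ^ k * genChoose (lam - r) i * genChoose (r + n - d - lam) (n - i)
      = lam ^ k * (if d = 0 then 1 else 0) := by
  induction k with
  | zero =>
    intro d n r lam h
    simp only [pow_zero, one_mul]
    have hv := genChoose_vandermonde (lam - r) (r + n - d - lam) n
    rw [show (lam - r) + (r + n - d - lam) = (n : ℝ) - d by ring] at hv
    rw [hv]
    have hd : d ≤ n := by omega
    rw [show ((n : ℝ) - d) = ((n - d : ℕ) : ℝ) by push_cast [hd]; ring,
      genChoose_eq_ringChoose, Ring.choose_natCast]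
    split_ifs with hd0
    · subst hd0; simp
    · rw [Nat.choose_eq_zero_of_lt (by omega)]; simp
  | succ k ih =>
    intro d n r lam h
    have e : ∀ i ∈ Finset.range (n + 1),
        (r + i) ^ (k + 1) * genChoose (lam - r) i * genChoose (r + n - d - lam) (n - i)
        = lam * ((r + i) ^ k * genChoose (lam - r) i * genChoose (r + n - d - lam) (n - i))
          - (lam - r) * ((r + i) ^ k * genChoose ((lam - 1) - r) i *
              genChoose (r + n - (d + 1 : ℕ) - (lam - 1)) (n - i)) := by
      intro i _
      have hs := sub_mul_genChoose (lam - r) i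
      rw [show (lam - r) - 1 = (lam - 1) - r by ring] at hs
      rw [show (r + (n : ℝ) - (d + 1 : ℕ) - (lam - 1)) = r + n - d - lam by push_cast; ring]
      rw [pow_succ]
      linear_combination (-((r + (i:ℝ)) ^ k * genChoose (r + n - d - lam) (n - i))) * hs
    rw [Finset.sum_congr rfl e, Finset.sum_sub_distrib, ← Finset.mul_sum, ← Finset.mul_sum,
      ih d n r lam (by omega), ih (d + 1) n r (lam - 1) (by omega)]
    simp only [Nat.add_eq_zero, and_false, if_false, one_ne_zero]
    split_ifs <;> ring

theorem fractional_moment_identity (r lam : ℝ) (p : ℕ) (hp : 1 ≤ p)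
    (k : ℕ) (hk1 : 1 ≤ k) (hk2 : k ≤ p) :
    ∑ i ∈ Finset.range (p + 1),
      (r + i) ^ k * genChoose (-r + lam) i * genChoose (r + p - lam) (p - i)
      = lam ^ k := by
  have h := key_s10 k 0 p r lam (by omega)
  simp only [Nat.cast_zero, sub_zero] at h
  norm_num at h
  rw [show (-r + lam) = lam - r by ring]
  exact h
end

section
/- Let a be real, d nonzero real, and k a positive integer with a_i = a + d(i-1) ≠ 0 for all i = 1, ..., k. Define c_{a_i} = (1/a_i)·C(-a_1/d, i-1)·C(a_k/d, k-i). Then Σ_{i=1}^k c_{a_i}·a_i = 1 and Σ_{i=1}^k c_{a_i}·a_i^j = 0 for each j = 2, ..., k. -/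
/-- Abel-style summation by parts for alternating binomial sums (Pascal's rule). -/
lemma pascal_sum (n : ℕ) (f : ℕ → ℝ) :
    ∑ m ∈ Finset.range (n+2), (-1:ℝ)^m * ((n+1).choose m) * f m
    = ∑ m ∈ Finset.range (n+1), (-1:ℝ)^m * (n.choose m) * (f m - f (m+1)) := by
  have h1 : ∑ m ∈ Finset.range (n+2), (-1:ℝ)^m * ((n+1).choose m) * f m
      = (∑ m ∈ Finset.range (n+1), (-1:ℝ)^(m+1) * ((n+1).choose (m+1)) * f (m+1)) + f 0 := by
    rw [Finset.sum_range_succ']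
    simp
  have h2 : ∀ m, (((n+1).choose (m+1) : ℝ)) = (n.choose m : ℝ) + (n.choose (m+1) : ℝ) := by
    intro m
    have := Nat.choose_succ_succ n m
    exact_mod_cast congrArg (Nat.cast : ℕ → ℝ) this
  have h3 : (∑ m ∈ Finset.range (n+1), (-1:ℝ)^(m+1) * ((n).choose (m+1)) * f (m+1)) + f 0
      = ∑ m ∈ Finset.range (n+1), (-1:ℝ)^m * (n.choose m) * f m := by
    rw [Finset.sum_range_succ, Finset.sum_range_succ' (fun m => (-1:ℝ)^m * (n.choose m) * f m) n]
    simp [Nat.choose_succ_self]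
  rw [h1]
  have : ∑ m ∈ Finset.range (n+1), (-1:ℝ)^(m+1) * ((n+1).choose (m+1)) * f (m+1)
      = (∑ m ∈ Finset.range (n+1), (-1:ℝ)^(m+1) * ((n).choose m) * f (m+1))
        + ∑ m ∈ Finset.range (n+1), (-1:ℝ)^(m+1) * ((n).choose (m+1)) * f (m+1) := by
    rw [← Finset.sum_add_distrib]
    refine Finset.sum_congr rfl fun m _ => ?_
    rw [h2]; ring
  rw [this, add_assoc, h3]
  rw [← Finset.sum_add_distrib]
  refine Finset.sum_congr rfl fun m _ => ?_
  ring

lemma S_top_step (n : ℕ) (x : ℝ)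
    (ih : ∀ r, r < n → ∀ y : ℝ,
      ∑ m ∈ Finset.range (n+1), (-1:ℝ)^m * (n.choose m) * (y + m)^r = 0) :
    ∑ m ∈ Finset.range (n+1), (-1:ℝ)^m * (n.choose m) * ((x + m)^n - (x + (m+1:ℕ))^n) = 0 := by
  have key : ∀ m : ℕ, ((x + m)^n - (x + (m+1:ℕ))^n : ℝ)
      = ∑ r ∈ Finset.range n, (-(n.choose r : ℝ)) * (x + m)^r := by
    intro m
    have hb : ((x + m) + 1)^n = ∑ r ∈ Finset.range (n+1), (x + m)^r * (1:ℝ)^(n-r) * (n.choose r) := add_pow _ _ _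
    have hc : (x + (m+1:ℕ) : ℝ) = (x + m) + 1 := by push_cast; ring
    rw [hc, hb, Finset.sum_range_succ, Nat.choose_self]
    simp only [one_pow, Nat.cast_one, mul_one]
    have hne : ∑ r ∈ Finset.range n, (-(n.choose r:ℝ)) * (x+m)^r
        = -∑ r ∈ Finset.range n, (x+m)^r * 1 * (n.choose r) := by
      rw [← Finset.sum_neg_distrib]
      exact Finset.sum_congr rfl fun r _ => by ring
    rw [hne]
    simp only [mul_one]
    ring
  calc ∑ m ∈ Finset.range (n+1), (-1:ℝ)^m * (n.choose m) * ((x + m)^n - (x + (m+1:ℕ))^n)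
      = ∑ m ∈ Finset.range (n+1), ∑ r ∈ Finset.range n,
          (-(n.choose r : ℝ)) * ((-1:ℝ)^m * (n.choose m) * (x + m)^r) := by
        refine Finset.sum_congr rfl fun m _ => ?_
        rw [key, Finset.mul_sum]
        exact Finset.sum_congr rfl fun r _ => by ring
    _ = ∑ r ∈ Finset.range n, (-(n.choose r : ℝ)) *
          ∑ m ∈ Finset.range (n+1), (-1:ℝ)^m * (n.choose m) * (x + m)^r := by
        rw [Finset.sum_comm]
        exact Finset.sum_congr rfl fun r _ => by rw [Finset.mul_sum]
    _ = 0 := by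
        refine Finset.sum_eq_zero fun r hr => ?_
        rw [ih r (Finset.mem_range.mp hr) x, mul_zero]

/-- Alternating binomial sums annihilate polynomials of low degree. -/
lemma S_zero : ∀ n s, s < n → ∀ x : ℝ,
    ∑ m ∈ Finset.range (n+1), (-1:ℝ)^m * (n.choose m) * (x + m)^s = 0 := by
  intro n
  induction n with
  | zero => intro s hs; omega
  | succ n ih =>
    intro s hs x
    have hps := pascal_sum n (fun m => (x + m)^s)
    rw [show n + 1 + 1 = n + 2 from rfl, hps]
    rcases Nat.lt_or_ge s n with h | h
    · have : ∑ m ∈ Finset.range (n+1), (-1:ℝ)^m * (n.choose m) * ((x + m)^s - (x + (m+1:ℕ))^s)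
          = (∑ m ∈ Finset.range (n+1), (-1:ℝ)^m * (n.choose m) * (x + m)^s)
            - ∑ m ∈ Finset.range (n+1), (-1:ℝ)^m * (n.choose m) * ((x+1) + m)^s := by
        rw [← Finset.sum_sub_distrib]
        refine Finset.sum_congr rfl fun m _ => ?_
        rw [show ((x + (m+1:ℕ))^s : ℝ) = ((x+1) + m)^s by push_cast; ring_nf]
        ring
      rw [this, ih s h x, ih s h (x+1), sub_zero]
    · have hs' : s = n := by omega
      rw [hs']
      exact S_top_step n x ih

/-- Partial fraction decomposition of `n! / (x(x+1)⋯(x+n))`. -/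
lemma partial_frac : ∀ n : ℕ, ∀ x : ℝ, (∀ m ∈ Finset.range (n+1), x + (m:ℝ) ≠ 0) →
    ∑ m ∈ Finset.range (n+1), (-1:ℝ)^m * (n.choose m) / (x + m)
      = (n.factorial : ℝ) / ∏ j ∈ Finset.range (n+1), (x + j) := by
  intro n
  induction n with
  | zero => intro x hx; simp
  | succ n ih =>
    intro x hx
    have hx0 : ∀ m ∈ Finset.range (n+1), x + (m:ℝ) ≠ 0 := fun m hm =>
      hx m (Finset.mem_range.mpr (by have := Finset.mem_range.mp hm; omega))
    have hx1 : ∀ m ∈ Finset.range (n+1), (x+1) + (m:ℝ) ≠ 0 := by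
      intro m hm
      have h := hx (m+1) (Finset.mem_range.mpr (by have := Finset.mem_range.mp hm; omega))
      intro hC
      apply h
      push_cast
      linarith
    have hps := pascal_sum n (fun m => 1 / (x + m))
    have hL : ∑ m ∈ Finset.range (n+1+1), (-1:ℝ)^m * ((n+1).choose m) / (x + m)
        = ∑ m ∈ Finset.range (n+2), (-1:ℝ)^m * ((n+1).choose m) * (1 / (x + m)) := by
      exact Finset.sum_congr rfl fun m _ => by ring
    rw [hL, hps]
    have hsplit : ∑ m ∈ Finset.range (n+1), (-1:ℝ)^m * (n.choose m) * (1/(x + m) - 1/(x + (m+1:ℕ)))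
        = (∑ m ∈ Finset.range (n+1), (-1:ℝ)^m * (n.choose m) / (x + m))
          - ∑ m ∈ Finset.range (n+1), (-1:ℝ)^m * (n.choose m) / ((x+1) + m) := by
      rw [← Finset.sum_sub_distrib]
      refine Finset.sum_congr rfl fun m _ => ?_
      rw [show (x + ((m:ℕ)+1:ℕ) : ℝ) = (x+1) + m by push_cast; ring]
      ring
    rw [hsplit, ih x hx0, ih (x+1) hx1]
    have hP : (∏ j ∈ Finset.range (n+1), (x + j)) ≠ 0 := Finset.prod_ne_zero_iff.mpr hx0
    have hQ : (∏ j ∈ Finset.range (n+1), ((x+1) + j)) ≠ 0 := Finset.prod_ne_zero_iff.mpr hx1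
    have e1 : (∏ j ∈ Finset.range (n+1+1), (x + j)) = (∏ j ∈ Finset.range (n+1), (x + j)) * (x + (n+1:ℕ)) :=
      Finset.prod_range_succ _ _
    have e2 : (∏ j ∈ Finset.range (n+1+1), (x + j)) = (∏ j ∈ Finset.range (n+1), ((x+1) + j)) * x := by
      rw [Finset.prod_range_succ' (fun j => x + (j:ℝ)) (n+1)]
      push_cast
      refine congrArg₂ (· * ·) (Finset.prod_congr rfl fun j _ => by push_cast; ring) (by ring)
    rw [e1]
    rw [div_sub_div _ _ hP hQ, div_eq_div_iff (mul_ne_zero hP hQ) (mul_ne_zero hP (by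
      have := hx (n+1) (Finset.mem_range.mpr (by omega)); push_cast at this ⊢; exact this))]
    have e3 : (∏ j ∈ Finset.range (n+1), ((x+1) + j)) * x = (∏ j ∈ Finset.range (n+1), (x + j)) * (x + (n+1:ℕ)) := by
      rw [← e2, e1]
    rw [Nat.factorial_succ]
    push_cast
    push_cast at e3
    linear_combination ((n.factorial : ℝ) * (∏ j ∈ Finset.range (n+1), (x + (j:ℝ)))) * e3

lemma genChoose_neg (x : ℝ) (m : ℕ) :
    genChoose (-x) m = (-1:ℝ)^m * (∏ j ∈ Finset.range m, (x + j)) / m.factorial := by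
  unfold genChoose
  congr 1
  have h : ∏ j ∈ Finset.range m, (-x - (j:ℝ)) = ∏ j ∈ Finset.range m, ((-1) * (x + (j:ℝ))) :=
    Finset.prod_congr rfl fun j _ => by ring
  rw [h, Finset.prod_mul_distrib, Finset.prod_const, Finset.card_range]

lemma genChoose_shift (x : ℝ) (n m : ℕ) (hm : m ≤ n) :
    genChoose (x + n) (n - m) = (∏ j ∈ Finset.range (n-m), (x + (m+1+j:ℕ))) / (n-m).factorial := by
  unfold genChoose
  congr 1
  rw [← Finset.prod_range_reflect (fun j => (x + (m+1+j:ℕ) : ℝ)) (n-m)]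
  refine Finset.prod_congr rfl fun j hj => ?_
  have hj' : j < n - m := Finset.mem_range.mp hj
  have : m + 1 + (n - m - 1 - j) = n - j := by omega
  rw [this]
  have hjn : j ≤ n := by omega
  push_cast [Nat.cast_sub hjn]
  ring

lemma prod_key (x : ℝ) (n m : ℕ) (hm : m ≤ n) :
    (∏ j ∈ Finset.range m, (x + j)) * (∏ j ∈ Finset.range (n-m), (x + (m+1+j:ℕ))) * (x + m)
      = ∏ j ∈ Finset.range (n+1), (x + j) := by
  have h1 : (∏ j ∈ Finset.range m, (x + j)) * (x + m) = ∏ j ∈ Finset.range (m+1), (x + j) :=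
    (Finset.prod_range_succ _ _).symm
  have h2 : ∏ j ∈ Finset.range (n+1), (x + j)
      = (∏ j ∈ Finset.range (m+1), (x + j)) * ∏ j ∈ Finset.range (n-m), (x + ((m+1)+j:ℕ)) := by
    rw [show n+1 = m+1+(n-m) from by omega, Finset.prod_range_add (fun j => (x + (j:ℕ) : ℝ)) (m+1) (n-m)]
  rw [h2, ← h1]
  ring

lemma term_eq_s12 (x : ℝ) (n m : ℕ) (hm : m ≤ n) (hxm : x + (m:ℝ) ≠ 0) :
    genChoose (-x) m * genChoose (x + n) (n - m)
      = (-1:ℝ)^m * (n.choose m) * (∏ j ∈ Finset.range (n+1), (x + j)) / ((x + m) * n.factorial) := by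
  rw [genChoose_neg, genChoose_shift x n m hm]
  have hfact : ((n.choose m : ℝ)) * m.factorial * (n-m).factorial = n.factorial := by
    exact_mod_cast congrArg (Nat.cast : ℕ → ℝ) (Nat.choose_mul_factorial_mul_factorial hm)
  have hm0 : (m.factorial : ℝ) ≠ 0 := Nat.cast_ne_zero.mpr (Nat.factorial_ne_zero m)
  have hnm0 : ((n-m).factorial : ℝ) ≠ 0 := Nat.cast_ne_zero.mpr (Nat.factorial_ne_zero _)
  have hn0 : (n.factorial : ℝ) ≠ 0 := Nat.cast_ne_zero.mpr (Nat.factorial_ne_zero n)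
  rw [div_mul_div_comm, div_eq_div_iff (by positivity) (mul_ne_zero hxm hn0)]
  rw [← hfact]
  have := prod_key x n m hm
  linear_combination ((-1:ℝ)^m * (n.choose m) * m.factorial * (n-m).factorial) * this

theorem arithmetic_diff_moments (a d : ℝ) (hd : d ≠ 0) (k : ℕ) (hk : 1 ≤ k)
    (A : ℕ → ℝ) (hA : ∀ i, A i = a + d * ((i : ℝ) - 1))
    (hA0 : ∀ i ∈ Finset.Icc 1 k, A i ≠ 0)
    (c : ℕ → ℝ)
    (hc : ∀ i, c i = (1 / A i) * genChoose (-(A 1) / d) (i - 1) * genChoose (A k / d) (k - i)) :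
    (∑ i ∈ Finset.Icc 1 k, c i * A i = 1) ∧
    (∀ j, 2 ≤ j → j ≤ k → ∑ i ∈ Finset.Icc 1 k, c i * A i ^ j = 0) := by
  obtain ⟨n, rfl⟩ : ∃ n, k = n + 1 := ⟨k - 1, by omega⟩
  set x := a / d with hxdef
  have hA1 : A 1 = a := by rw [hA]; push_cast; ring
  have hda : d * (a / d) = a := by field_simp
  have hAm : ∀ m : ℕ, A (1+m) = d * (x + m) := by
    intro m; rw [hA]; simp only [hxdef]; push_cast; linear_combination -hda
  have hAk : A (n+1) / d = x + n := by
    rw [show n+1 = 1+n from by omega, hAm n, mul_div_cancel_left₀ _ hd]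
  have hx : ∀ m ∈ Finset.range (n+1), x + (m:ℝ) ≠ 0 := by
    intro m hm
    have hmn := Finset.mem_range.mp hm
    have h0 := hA0 (1+m) (Finset.mem_Icc.mpr ⟨by omega, by omega⟩)
    rw [hAm] at h0
    intro hC; exact h0 (by rw [hC, mul_zero])
  have hP : (∏ j ∈ Finset.range (n+1), (x + j)) ≠ 0 := Finset.prod_ne_zero_iff.mpr hx
  have hn0 : (n.factorial : ℝ) ≠ 0 := Nat.cast_ne_zero.mpr (Nat.factorial_ne_zero n)
  -- the basic product of the two generalized binomial coefficients
  have hbase : ∀ m ∈ Finset.range (n+1),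
      c (1+m) * A (1+m)
        = (-1:ℝ)^m * (n.choose m) * (∏ j ∈ Finset.range (n+1), (x + j)) / ((x + m) * n.factorial) := by
    intro m hm
    have hmn := Finset.mem_range.mp hm
    have hxm := hx m hm
    have hAne : A (1+m) ≠ 0 := by
      rw [hAm]; exact mul_ne_zero hd hxm
    have h1 : (1+m) - 1 = m := by omega
    have h2 : (n+1) - (1+m) = n - m := by omega
    have h3 : -(A 1) / d = -x := by rw [hA1, hxdef, neg_div]
    have : c (1+m) * A (1+m) = genChoose (-x) m * genChoose (x + n) (n - m) := by
      rw [hc, h1, h2, h3, hAk]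
      field_simp
    rw [this, term_eq_s12 x n m (by omega) hxm]
  have hIcc : Finset.Icc 1 (n+1) = Finset.Ico 1 (n+2) := (Finset.Ico_add_one_right_eq_Icc 1 (n+1)).symm
  constructor
  · rw [hIcc, Finset.sum_Ico_eq_sum_range]
    have : ∀ m ∈ Finset.range (n+2-1),
        c (1+m) * A (1+m) = ((-1:ℝ)^m * (n.choose m) / (x + m)) *
          ((∏ j ∈ Finset.range (n+1), (x + j)) / n.factorial) := by
      intro m hm
      rw [hbase m (by simpa using hm), div_mul_div_comm]
    rw [Finset.sum_congr rfl this, ← Finset.sum_mul,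
      show n+2-1 = n+1 from rfl, partial_frac n x hx]
    field_simp
  · intro j hj2 hjk
    obtain ⟨s, rfl⟩ : ∃ s, j = s + 2 := ⟨j - 2, by omega⟩
    have hsn : s < n := by omega
    rw [hIcc, Finset.sum_Ico_eq_sum_range]
    have hterm : ∀ m ∈ Finset.range (n+2-1),
        c (1+m) * A (1+m) ^ (s+2)
          = ((-1:ℝ)^m * (n.choose m) * (x + m)^s) *
            (d^(s+1) * (∏ j ∈ Finset.range (n+1), (x + j)) / n.factorial) := by
      intro m hm
      have hm' : m ∈ Finset.range (n+1) := by simpa using hm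
      have hxm := hx m hm'
      have hpow : A (1+m) ^ (s+2) = A (1+m) * (d * (x+m))^(s+1) := by
        rw [hAm, pow_succ' (d * (x + (m:ℝ))) (s+1)]
      rw [hpow, ← mul_assoc, hbase m hm']
      rw [mul_pow, pow_succ d s]
      have : (x + (m:ℝ))^(s+1) = (x+m)^s * (x+m) := pow_succ _ _
      rw [this]
      field_simp
    rw [Finset.sum_congr rfl hterm, ← Finset.sum_mul, show n+2-1 = n+1 from rfl,
      S_zero n s hsn x, zero_mul]
end

section
/- Let a be real, d a nonzero real, and k a positive integer with a_i = a + d(i-1) ≠ 0 for all i. If f is C^{k+1}, then f'(x) = (1/h)·Σ_{i=1}^k c_{a_i}·[f(x + a_i h) - f(x)] + O(h^k), where c_{a_i} = (1/a_i)·C(-a_1/d, i-1)·C(a_k/d, k-i). -/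
open Finset Polynomial


lemma prod_range_sub_cast (n : ℕ) : ∏ l ∈ Finset.range n, ((n:ℝ) - l) = (n.factorial : ℝ) := by
  have h0 : ∀ l ∈ Finset.range n, ((n - l : ℕ) : ℝ) = (n:ℝ) - l := by
    intro l hl; rw [Nat.cast_sub (le_of_lt (Finset.mem_range.mp hl))]
  rw [← Finset.prod_congr rfl h0, ← Nat.cast_prod]
  norm_cast
  have := Finset.prod_range_reflect (fun j => j + 1) n
  rw [← Finset.prod_range_add_one_eq_factorial, ← this]
  exact Finset.prod_congr rfl (fun j hj => by have := Finset.mem_range.mp hj; omega)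

lemma cancel_aux {d X Y : ℝ} (hd : d ≠ 0) : (d * X)⁻¹ * (d * Y) = X⁻¹ * Y := by
  calc (d * X)⁻¹ * (d * Y) = (d⁻¹ * d) * (X⁻¹ * Y) := by rw [mul_inv]; ring
  _ = X⁻¹ * Y := by rw [inv_mul_cancel₀ hd, one_mul]

lemma basis_eval_key (a d : ℝ) (hd : d ≠ 0) (k : ℕ) (A : ℕ → ℝ)
    (hA : ∀ i, A i = a + d * ((i : ℝ) - 1)) {i : ℕ} (hi : i ∈ Finset.Icc 1 k) :
    Polynomial.eval 0 (Lagrange.basis (Finset.Icc 1 k) A i)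
      = genChoose (-(A 1) / d) (i - 1) * genChoose (A k / d) (k - i) := by
  obtain ⟨hi1, hik⟩ := Finset.mem_Icc.mp hi
  have hsplit : (Finset.Icc 1 k).erase i = Finset.Icc 1 (i-1) ∪ Finset.Icc (i+1) k := by
    ext j; simp only [Finset.mem_erase, Finset.mem_Icc, Finset.mem_union]; omega
  have hdisj : Disjoint (Finset.Icc 1 (i-1)) (Finset.Icc (i+1) k) := by
    rw [Finset.disjoint_left]; intro j h1 h2
    simp only [Finset.mem_Icc] at h1 h2; omega
  rw [Lagrange.basis, Polynomial.eval_prod, hsplit, Finset.prod_union hdisj]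
  have hterm : ∀ j, Polynomial.eval 0 (Lagrange.basisDivisor (A i) (A j))
      = (A i - A j)⁻¹ * (0 - A j) := by
    intro j; simp [Lagrange.basisDivisor]
  -- first product
  have hP1 : ∏ j ∈ Finset.Icc 1 (i-1), Polynomial.eval 0 (Lagrange.basisDivisor (A i) (A j))
      = genChoose (-(A 1) / d) (i - 1) := by
    rw [Finset.prod_congr rfl (fun j _ => hterm j)]
    have : Finset.Icc 1 (i-1) = Finset.Ico 1 ((i-1)+1) := by rw [Finset.Ico_add_one_right_eq_Icc]
    rw [this, Finset.prod_Ico_eq_prod_range]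
    simp only [Nat.add_sub_cancel]
    have hstep : ∀ l ∈ Finset.range (i-1),
        (A i - A (1 + l))⁻¹ * (0 - A (1 + l))
          = (((i:ℝ) - 1) - l)⁻¹ * ((-(A 1) / d) - l) := by
      intro l hl
      have hl' := Finset.mem_range.mp hl
      have e1 : A i - A (1 + l) = d * (((i:ℝ) - 1) - l) := by
        rw [hA i, hA (1+l)]; push_cast; ring
      have e2 : 0 - A (1 + l) = d * ((-(A 1) / d) - l) := by
        rw [hA (1+l), hA 1]; field_simp; push_cast; ring
      rw [e1, e2, cancel_aux hd]
    rw [Finset.prod_congr rfl hstep, genChoose]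
    rw [Finset.prod_mul_distrib, ← prod_range_sub_cast (i-1)]
    have hc : ((i-1 : ℕ):ℝ) = (i:ℝ) - 1 := by rw [Nat.cast_sub hi1, Nat.cast_one]
    rw [hc]
    rw [Finset.prod_inv_distrib]
    ring
  -- second product
  have hP2 : ∏ j ∈ Finset.Icc (i+1) k, Polynomial.eval 0 (Lagrange.basisDivisor (A i) (A j))
      = genChoose (A k / d) (k - i) := by
    rw [Finset.prod_congr rfl (fun j _ => hterm j)]
    have : Finset.Icc (i+1) k = Finset.Ico (i+1) (k+1) := by rw [Finset.Ico_add_one_right_eq_Icc]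
    rw [this, Finset.prod_Ico_eq_prod_range]
    have hcard : k + 1 - (i+1) = k - i := by omega
    rw [hcard]
    have hstep : ∀ l ∈ Finset.range (k-i),
        (A i - A (i + 1 + l))⁻¹ * (0 - A (i + 1 + l))
          = ((1:ℝ) + l)⁻¹ * ((A k / d) - ((k - i : ℕ) - 1 - l)) := by
      intro l hl
      have hl' := Finset.mem_range.mp hl
      have e1 : A i - A (i + 1 + l) = -(d * ((1:ℝ) + l)) := by
        rw [hA i, hA (i+1+l)]; push_cast; ring
      have e2 : 0 - A (i + 1 + l) = -(d * ((A k / d) - (((k - i : ℕ):ℝ) - 1 - l))) := by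
        rw [hA (i+1+l), hA k]
        have : ((k - i : ℕ):ℝ) = (k:ℝ) - i := by
          rw [Nat.cast_sub hik]
        rw [this]; field_simp; push_cast; ring
      rw [e1, e2, inv_neg, neg_mul_neg, cancel_aux hd]
    rw [Finset.prod_congr rfl hstep, genChoose]
    rw [Finset.prod_mul_distrib]
    have h3 : ∏ l ∈ Finset.range (k-i), ((1:ℝ) + l)⁻¹ = ((k-i).factorial : ℝ)⁻¹ := by
      rw [Finset.prod_inv_distrib]
      congr 1
      rw [← Finset.prod_range_add_one_eq_factorial (k-i)]
      push_cast [Nat.cast_prod]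
      exact Finset.prod_congr rfl (fun j _ => by ring)
    have h4 : ∏ l ∈ Finset.range (k-i), ((A k / d) - (((k - i : ℕ):ℝ) - 1 - l))
        = ∏ m ∈ Finset.range (k-i), ((A k / d) - m) := by
      rw [← Finset.prod_range_reflect (fun m => (A k / d) - (m:ℝ)) (k-i)]
      refine Finset.prod_congr rfl (fun j hj => ?_)
      have hj' := Finset.mem_range.mp hj
      congr 1
      have : ((k - i - 1 - j : ℕ):ℝ) = ((k - i:ℕ):ℝ) - 1 - j := by
        have h5 : 1 + j ≤ k - i := by omega
        push_cast [Nat.cast_sub (by omega : j ≤ k - i - 1), Nat.cast_sub (by omega : 1 ≤ k - i)]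
        ring
      rw [this]
    rw [h3, h4]
    ring
  rw [hP1, hP2]

lemma moments (a d : ℝ) (hd : d ≠ 0) (k : ℕ) (hk : 1 ≤ k)
    (A : ℕ → ℝ) (hA : ∀ i, A i = a + d * ((i : ℝ) - 1))
    (hA0 : ∀ i ∈ Finset.Icc 1 k, A i ≠ 0)
    (c : ℕ → ℝ)
    (hc : ∀ i, c i = (1 / A i) * genChoose (-(A 1) / d) (i - 1) * genChoose (A k / d) (k - i))
    {m : ℕ} (hm : m < k) :
    ∑ i ∈ Finset.Icc 1 k, c i * A i ^ (m+1) = if m = 0 then 1 else 0 := by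
  classical
  have hinj : Set.InjOn A (Finset.Icc 1 k) := by
    intro p _ q _ hpq
    rw [hA p, hA q] at hpq
    have h1 : d * ((p:ℝ) - 1) = d * ((q:ℝ) - 1) := by linarith
    have h2 : (p:ℝ) - 1 = (q:ℝ) - 1 := mul_left_cancel₀ hd h1
    have : (p:ℝ) = q := by linarith
    exact_mod_cast this
  have hcard : (Finset.Icc 1 k).card = k := by rw [Nat.card_Icc]; omega
  have hdeg : (Polynomial.X ^ m : Polynomial ℝ).degree < ((Finset.Icc 1 k).card : ℕ) := by
    rw [Polynomial.degree_X_pow, hcard]; exact_mod_cast hm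
  have heq := Lagrange.eq_interpolate (s := Finset.Icc 1 k) (v := A) hinj hdeg
  have h2 := congrArg (Polynomial.eval (0:ℝ)) heq
  rw [Lagrange.interpolate_apply, Polynomial.eval_finset_sum] at h2
  simp only [Polynomial.eval_mul, Polynomial.eval_C, Polynomial.eval_pow, Polynomial.eval_X] at h2
  rw [zero_pow_eq] at h2
  rw [h2]
  refine Finset.sum_congr rfl fun i hi => ?_
  rw [basis_eval_key a d hd k A hA hi, hc i]
  have hAi := hA0 i hi
  field_simp
  ring

lemma idw_eq_iterated {n : ℕ} {f : ℝ → ℝ} (hf : ContDiff ℝ (n : ℕ∞) f) {s : Set ℝ}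
    (hs : UniqueDiffOn ℝ s) {x : ℝ} (hx : x ∈ s) {m : ℕ} (hm : m ≤ n) :
    iteratedDerivWithin m f s x = iteratedDeriv m f x := by
  have h1 := ((contDiff_iff_ftaylorSeries.mp hf).hasFTaylorSeriesUpToOn s).eq_iteratedFDerivWithin_of_uniqueDiffOn
    (m := m) (by exact_mod_cast hm) hs hx
  rw [iteratedDerivWithin_eq_iteratedFDerivWithin, iteratedDeriv_eq_iteratedFDeriv, ← h1]
  rfl

theorem arithmetic_difference_order_k (a d : ℝ) (hd : d ≠ 0) (k : ℕ) (hk : 1 ≤ k)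
    (A : ℕ → ℝ) (hA : ∀ i, A i = a + d * ((i : ℝ) - 1))
    (hA0 : ∀ i ∈ Finset.Icc 1 k, A i ≠ 0)
    (f : ℝ → ℝ) (hf : ContDiff ℝ (k + 1) f)
    (c : ℕ → ℝ)
    (hc : ∀ i, c i = (1 / A i) * genChoose (-(A 1) / d) (i - 1) * genChoose (A k / d) (k - i))
    (x : ℝ) :
    ∃ C > 0, ∃ h₀ > 0, ∀ h : ℝ, 0 < h → h ≤ h₀ →
      |deriv f x - (1 / h) * ∑ i ∈ Finset.Icc 1 k, c i * (f (x + A i * h) - f x)|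
        ≤ C * h ^ k := by
  classical
  have hf' : ContDiff ℝ ((k+1 : ℕ) : ℕ∞) f := by exact_mod_cast hf
  set D : ℕ → ℝ := fun m => iteratedDeriv m f x with hD
  set B : ℝ := ∑ i ∈ Finset.Icc 1 k, |A i| with hBdef
  have hB : ∀ i ∈ Finset.Icc 1 k, |A i| ≤ B :=
    fun i hi => Finset.single_le_sum (fun j _ => abs_nonneg (A j)) hi
  have hB0 : 0 ≤ B := Finset.sum_nonneg fun j _ => abs_nonneg (A j)
  have hcont : ContinuousOn (iteratedDeriv (k+1) f) (Set.Icc (x-B) (x+B)) :=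
    (hf'.continuous_iteratedDeriv (k+1) (by exact_mod_cast le_refl ((k+1 : ℕ) : ℕ∞))).continuousOn
  obtain ⟨M, hM⟩ := (isCompact_Icc (a := x - B) (b := x + B)).exists_bound_of_continuousOn hcont
  have hM0 : 0 ≤ M := le_trans (norm_nonneg _) (hM x (by constructor <;> linarith))
  set C₀ : ℝ := ∑ i ∈ Finset.Icc 1 k, |c i| * (|A i|^(k+1) * M / (k.factorial : ℝ)) with hC₀
  have hC₀0 : 0 ≤ C₀ := Finset.sum_nonneg fun i _ => by positivity
  refine ⟨C₀ + 1, by linarith, 1, one_pos, ?_⟩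
  intro h hh0 hh1
  have hu : UniqueDiffOn ℝ (Set.Icc (0:ℝ) h) := uniqueDiffOn_Icc hh0
  have h0mem : (0:ℝ) ∈ Set.Icc (0:ℝ) h := Set.mem_Icc.mpr ⟨le_refl 0, hh0.le⟩
  have hhmem : h ∈ Set.Icc (0:ℝ) h := Set.mem_Icc.mpr ⟨hh0.le, le_refl h⟩
  -- per-index Taylor expansion
  have key : ∀ i : ℕ, ∃ E : ℝ, i ∈ Finset.Icc 1 k →
      (f (x + A i * h) - f x
        = (∑ m ∈ Finset.range k,
            (((m+1).factorial : ℝ))⁻¹ * h^(m+1) * (A i)^(m+1) * D (m+1)) + E)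
      ∧ |E| ≤ |A i|^(k+1) * M * h^(k+1) / (k.factorial : ℝ) := by
    intro i
    by_cases hi : i ∈ Finset.Icc 1 k
    swap
    · exact ⟨0, fun h' => absurd h' hi⟩
    have hgC : ContDiff ℝ ((k+1:ℕ) : ℕ∞) (fun t : ℝ => f (x + A i * t)) := by
      have h1 : ContDiff ℝ ((k+1:ℕ):ℕ∞) (fun t : ℝ => x + A i * t) := by fun_prop
      exact hf'.comp h1
    have hderivg : ∀ m, m ≤ k+1 → ∀ t : ℝ,
        iteratedDeriv m (fun t : ℝ => f (x + A i * t)) t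
          = (A i)^m * iteratedDeriv m f (x + A i * t) := by
      intro m hm t
      have hF : ContDiff ℝ (m : ℕ∞) (fun u : ℝ => f (x + u)) := by
        have h2 : ContDiff ℝ ((k+1:ℕ):ℕ∞) (fun u : ℝ => x + u) := by fun_prop
        exact (hf'.comp h2).of_le (by exact_mod_cast hm)
      have h3 := congrFun (iteratedDeriv_comp_const_mul hF (A i)) t
      rw [h3, iteratedDeriv_comp_const_add]
    -- Taylor's theorem
    have hcast : ((k : ℕ∞) + 1) = ((k+1 : ℕ) : ℕ∞) := by push_cast; rfl
    have hcdOn : ContDiffOn ℝ ((k : ℕ∞) + 1) (fun t : ℝ => f (x + A i * t)) (Set.Icc 0 h) :=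
      hgC.contDiffOn.of_le (le_of_eq (by norm_cast))
    have hboundC : ∀ y ∈ Set.Icc (0:ℝ) h,
        ‖iteratedDerivWithin (k+1) (fun t : ℝ => f (x + A i * t)) (Set.Icc 0 h) y‖
          ≤ |A i|^(k+1) * M := by
      intro y hy
      rw [idw_eq_iterated hgC hu hy (le_refl (k+1)), hderivg (k+1) le_rfl y,
        Real.norm_eq_abs, abs_mul, abs_pow]
      have hmem : x + A i * y ∈ Set.Icc (x - B) (x + B) := by
        have h4 : |A i * y| ≤ B := by
          rw [abs_mul]
          calc |A i| * |y| ≤ B * 1 := by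
                apply mul_le_mul (hB i hi) ?_ (abs_nonneg _) hB0
                rw [abs_of_nonneg hy.1]; linarith [hy.2]
          _ = B := mul_one B
        obtain ⟨h5, h6⟩ := abs_le.mp h4
        constructor <;> linarith
      exact mul_le_mul_of_nonneg_left (hM _ hmem) (by positivity)
    have htay := taylor_mean_remainder_bound (f := fun t : ℝ => f (x + A i * t))
      (a := 0) (b := h) (x := h) (n := k) hh0.le hcdOn hhmem hboundC
    have htv : taylorWithinEval (fun t : ℝ => f (x + A i * t)) k (Set.Icc 0 h) 0 h
        = ∑ m ∈ Finset.range (k+1), ((m.factorial:ℝ))⁻¹ * h^m * ((A i)^m * D m) := by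
      rw [taylor_within_apply]
      refine Finset.sum_congr rfl fun m hm => ?_
      have hm' : m ≤ k + 1 := by have := Finset.mem_range.mp hm; omega
      rw [idw_eq_iterated hgC hu h0mem hm', hderivg m hm' 0]
      simp [hD, smul_eq_mul]
    refine ⟨f (x + A i * h) - taylorWithinEval (fun t : ℝ => f (x + A i * t)) k (Set.Icc 0 h) 0 h,
      fun _ => ⟨?_, ?_⟩⟩
    · rw [htv, Finset.sum_range_succ']
      have hD0 : ((Nat.factorial 0:ℝ))⁻¹ * h^0 * ((A i)^0 * D 0) = f x := by
        simp [hD, iteratedDeriv_zero]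
      rw [hD0]
      have hre : ∑ m ∈ Finset.range k,
          (((m+1).factorial:ℝ))⁻¹ * h^(m+1) * ((A i)^(m+1) * D (m+1))
          = ∑ m ∈ Finset.range k,
          (((m+1).factorial : ℝ))⁻¹ * h^(m+1) * (A i)^(m+1) * D (m+1) :=
        Finset.sum_congr rfl fun m _ => by ring
      rw [hre]
      ring
    · calc ‖f (x + A i * h) - taylorWithinEval (fun t : ℝ => f (x + A i * t)) k (Set.Icc 0 h) 0 h‖
          ≤ |A i|^(k+1) * M * (h - 0)^(k+1) / (k.factorial:ℝ) := htay
      _ = |A i|^(k+1) * M * h^(k+1) / (k.factorial:ℝ) := by rw [sub_zero]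
  choose E hE using key
  -- sum identity
  have hmomm : ∀ m, m < k → ∑ i ∈ Finset.Icc 1 k, c i * A i ^ (m+1) = if m = 0 then 1 else 0 :=
    fun m hm => moments a d hd k hk A hA hA0 c hc hm
  have hsum : ∑ i ∈ Finset.Icc 1 k, c i * (f (x + A i * h) - f x)
      = h * deriv f x + ∑ i ∈ Finset.Icc 1 k, c i * E i := by
    have step1 : ∀ i ∈ Finset.Icc 1 k, c i * (f (x + A i * h) - f x)
        = (∑ m ∈ Finset.range k,
            (((m+1).factorial : ℝ))⁻¹ * h^(m+1) * D (m+1) * (c i * A i^(m+1))) + c i * E i := by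
      intro i hi
      rw [((hE i) hi).1, mul_add, Finset.mul_sum]
      congr 1
      exact Finset.sum_congr rfl fun m _ => by ring
    rw [Finset.sum_congr rfl step1, Finset.sum_add_distrib]
    congr 1
    rw [Finset.sum_comm]
    have step2 : ∀ m ∈ Finset.range k,
        ∑ i ∈ Finset.Icc 1 k, (((m+1).factorial : ℝ))⁻¹ * h^(m+1) * D (m+1) * (c i * A i^(m+1))
          = (((m+1).factorial : ℝ))⁻¹ * h^(m+1) * D (m+1) * (if m = 0 then 1 else 0) := by
      intro m hm
      rw [← Finset.mul_sum, hmomm m (Finset.mem_range.mp hm)]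
    rw [Finset.sum_congr rfl step2]
    have hk0 : (0:ℕ) ∈ Finset.range k := Finset.mem_range.mpr hk
    rw [Finset.sum_congr rfl (fun m _ => by rw [mul_ite, mul_one, mul_zero]),
      Finset.sum_ite_eq' (Finset.range k) 0
        (fun m => (((m+1).factorial : ℝ))⁻¹ * h^(m+1) * D (m+1)), if_pos hk0]
    simp [hD, iteratedDeriv_one]
  -- final bound
  have hne : h ≠ 0 := ne_of_gt hh0
  rw [hsum]
  have hrw : deriv f x - (1 / h) * (h * deriv f x + ∑ i ∈ Finset.Icc 1 k, c i * E i)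
      = -((1/h) * ∑ i ∈ Finset.Icc 1 k, c i * E i) := by
    field_simp
    ring
  rw [hrw, abs_neg, abs_mul, abs_of_nonneg (by positivity : (0:ℝ) ≤ 1/h)]
  have hSb : |∑ i ∈ Finset.Icc 1 k, c i * E i|
      ≤ ∑ i ∈ Finset.Icc 1 k, |c i| * (|A i|^(k+1) * M * h^(k+1) / (k.factorial : ℝ)) := by
    calc |∑ i ∈ Finset.Icc 1 k, c i * E i| ≤ ∑ i ∈ Finset.Icc 1 k, |c i * E i| :=
          Finset.abs_sum_le_sum_abs _ _
    _ ≤ _ := by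
        refine Finset.sum_le_sum fun i hi => ?_
        rw [abs_mul]
        exact mul_le_mul_of_nonneg_left ((hE i hi).2) (abs_nonneg _)
  calc (1/h) * |∑ i ∈ Finset.Icc 1 k, c i * E i|
      ≤ (1/h) * ∑ i ∈ Finset.Icc 1 k, |c i| * (|A i|^(k+1) * M * h^(k+1) / (k.factorial : ℝ)) :=
        mul_le_mul_of_nonneg_left hSb (by positivity)
  _ = C₀ * h^k := by
      rw [hC₀, Finset.sum_mul, Finset.mul_sum]
      refine Finset.sum_congr rfl fun i _ => ?_
      rw [pow_succ]
      field_simp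
      ring
  _ ≤ (C₀ + 1) * h^k := by
      have : (0:ℝ) ≤ h^k := by positivity
      nlinarith
end

section
/- Let a be real, d nonzero, n a positive integer with a_i = a + d(i-1) ≠ 0 for all i, and let A be the n×n matrix with A_{ij} = (a + (j-1)d)^i. Then A is invertible with inverse B given by B_{ij} = ((-1)^{i+j}/(a+(i-1)d)) · σ_{n-j}(T \ {a+(i-1)d}) / (d^{n-1}·(i-1)!·(n-i)!), where T = {a, a+d, ..., a+(n-1)d} and σ_k denotes the kth elementary symmetric polynomial of the elements of the set (with σ_0 = 1). -/
/-- `esymm s k` is the `k`-th elementary symmetric polynomial of the elements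
of the finite set `s` of real numbers (with `esymm s 0 = 1`). -/
noncomputable def esymm (s : Finset ℝ) (k : ℕ) : ℝ :=
  ∑ t ∈ Finset.powersetCard k s, ∏ x ∈ t, x

lemma esymm_val (s : Finset ℝ) (k : ℕ) : esymm s k = Multiset.esymm s.val k := by
  have h := Finset.esymm_map_val (id : ℝ → ℝ) s k
  simp only [Multiset.map_id] at h
  rw [esymm, h]
  rfl

lemma prod_sub_esymm (s : Finset ℝ) (y : ℝ) :
    ∏ c ∈ s, (y - c) =
      ∑ j ∈ Finset.range (s.card + 1), (-1 : ℝ) ^ j * esymm s j * y ^ (s.card - j) := by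
  have h := Multiset.prod_X_sub_X_eq_sum_esymm (s.val)
  have h2 := congrArg (Polynomial.eval y) h
  rw [Polynomial.eval_multiset_prod, Multiset.map_map] at h2
  rw [Finset.prod]
  convert h2 using 2 with t
  · rfl
  · simp
  · rw [Polynomial.eval_finset_sum]
    refine Finset.sum_congr rfl fun j _ => ?_
    rw [esymm_val]
    simp only [Polynomial.eval_mul, Polynomial.eval_pow, Polynomial.eval_neg,
      Polynomial.eval_one, Polynomial.eval_C, Polynomial.eval_X]
    rw [mul_assoc]; rfl

lemma fact_prod_lt (j : ℕ) : ∏ l ∈ Finset.range j, ((j : ℝ) - l) = (Nat.factorial j : ℝ) := by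
  have h : ∏ l ∈ Finset.range j, ((j : ℝ) - l) = ((∏ l ∈ Finset.range j, (j - l) : ℕ) : ℝ) := by
    rw [Nat.cast_prod]
    refine Finset.prod_congr rfl fun l hl => ?_
    rw [Finset.mem_range] at hl
    rw [Nat.cast_sub hl.le]
  rw [h]
  congr 1
  rw [← Finset.prod_range_reflect (fun l => j - l) j, ← Finset.prod_range_add_one_eq_factorial]
  refine Finset.prod_congr rfl fun l hl => ?_
  rw [Finset.mem_range] at hl
  omega

lemma fact_prod_gt (j n : ℕ) (h : j < n) :
    ∏ l ∈ Finset.Ico (j + 1) n, ((j : ℝ) - l) =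
      (-1 : ℝ) ^ (n - 1 - j) * (Nat.factorial (n - 1 - j) : ℝ) := by
  rw [Finset.prod_Ico_eq_prod_range]
  have hn : n - (j + 1) = n - 1 - j := by omega
  rw [hn]
  have hc : ∀ i ∈ Finset.range (n - 1 - j), ((j : ℝ) - ((j + 1 + i : ℕ) : ℝ)) = -1 * ((i + 1 : ℕ) : ℝ) := by
    intro i _; push_cast; ring
  rw [Finset.prod_congr rfl hc, Finset.prod_mul_distrib, Finset.prod_const,
    Finset.card_range, ← Nat.cast_prod, Finset.prod_range_add_one_eq_factorial]

lemma erase_split (n j : ℕ) (h : j < n) :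
    (Finset.range n).erase j = Finset.range j ∪ Finset.Ico (j + 1) n := by
  ext m
  simp only [Finset.mem_erase, Finset.mem_range, Finset.mem_union, Finset.mem_Ico]
  omega

lemma prod_cast_sub (n : ℕ) (j : Fin n) :
    ∏ l ∈ Finset.univ.erase j, ((j : ℝ) - (l : ℝ)) =
      (-1 : ℝ) ^ (n - 1 - (j : ℕ)) * (Nat.factorial (j : ℕ) : ℝ) *
        (Nat.factorial (n - 1 - (j : ℕ)) : ℝ) := by
  have himg : (Finset.univ.erase j).image (Fin.val) = (Finset.range n).erase (j : ℕ) := by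
    ext m
    simp only [Finset.mem_image, Finset.mem_erase, Finset.mem_univ, and_true, Finset.mem_range]
    constructor
    · rintro ⟨l, hl, rfl⟩
      exact ⟨fun h => hl (Fin.ext h), l.isLt⟩
    · rintro ⟨hm, hlt⟩
      exact ⟨⟨m, hlt⟩, fun h => hm (congrArg Fin.val h), rfl⟩
  have hinj : ∀ x ∈ Finset.univ.erase j, ∀ y ∈ Finset.univ.erase j,
      Fin.val x = Fin.val y → x = y := fun x _ y _ h => Fin.ext h
  have := Finset.prod_image (s := (Finset.univ.erase j : Finset (Fin n))) (g := Fin.val)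
    (f := fun m : ℕ => ((j : ℕ) : ℝ) - (m : ℝ)) hinj
  rw [himg] at this
  rw [show (∏ l ∈ Finset.univ.erase j, ((j : ℝ) - (l : ℝ))) =
      ∏ l ∈ Finset.univ.erase j, ((j : ℝ) - ((l : ℕ) : ℝ)) from rfl, ← this,
    erase_split n (j : ℕ) j.isLt, Finset.prod_union (by
      simp only [Finset.disjoint_left, Finset.mem_range, Finset.mem_Ico]
      omega),
    fact_prod_lt, fact_prod_gt _ _ j.isLt]
  ring

theorem vandermonde_inverse (a d : ℝ) (hd : d ≠ 0) (n : ℕ) (hn : 1 ≤ n)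
    (hne : ∀ i ∈ Finset.Icc 1 n, a + d * ((i : ℝ) - 1) ≠ 0)
    (T : Finset ℝ) (hT : T = (Finset.range n).image (fun j : ℕ => a + (j : ℝ) * d))
    (A B : Matrix (Fin n) (Fin n) ℝ)
    (hA : ∀ i j : Fin n, A i j = (a + (j : ℝ) * d) ^ ((i : ℕ) + 1))
    (hB : ∀ i j : Fin n, B i j =
      ((-1 : ℝ) ^ (((i : ℕ) + 1) + ((j : ℕ) + 1)) / (a + (i : ℝ) * d)) *
        (esymm (T.erase (a + (i : ℝ) * d)) (n - ((j : ℕ) + 1)) /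
          (d ^ (n - 1) * (Nat.factorial (i : ℕ)) * (Nat.factorial (n - 1 - (i : ℕ))))) ) :
    A * B = 1 ∧ B * A = 1 := by
  -- basic facts
  have hinj : Function.Injective (fun l : Fin n => a + (l : ℝ) * d) := by
    intro u v huv
    simp only at huv
    have : ((u : ℕ) : ℝ) = ((v : ℕ) : ℝ) := by
      exact mul_right_cancel₀ hd (add_left_cancel huv)
    exact Fin.ext (Nat.cast_injective this)
  have hx0 : ∀ j : Fin n, a + (j : ℝ) * d ≠ 0 := by
    intro j
    have hmem : (j : ℕ) + 1 ∈ Finset.Icc 1 n := by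
      simp only [Finset.mem_Icc]
      exact ⟨Nat.le_add_left 1 _, j.isLt⟩
    have h := hne ((j : ℕ) + 1) hmem
    have he : a + (j : ℝ) * d = a + d * ((((j : ℕ) + 1 : ℕ) : ℝ) - 1) := by
      push_cast; ring
    rw [he]
    exact h
  have hT' : T = Finset.image (fun l : Fin n => a + (l : ℝ) * d) Finset.univ := by
    rw [hT]
    ext c
    simp only [Finset.mem_image, Finset.mem_range, Finset.mem_univ, true_and]
    constructor
    · rintro ⟨m, hm, rfl⟩; exact ⟨⟨m, hm⟩, rfl⟩
    · rintro ⟨l, rfl⟩; exact ⟨(l : ℕ), l.isLt, rfl⟩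
  have hTcard : T.card = n := by
    rw [hT', Finset.card_image_of_injective _ hinj, Finset.card_univ, Fintype.card_fin]
  have hxT : ∀ k : Fin n, a + (k : ℝ) * d ∈ T := by
    intro k; rw [hT']; exact Finset.mem_image_of_mem _ (Finset.mem_univ k)
  have hfac : ∀ m : ℕ, (Nat.factorial m : ℝ) ≠ 0 := fun m =>
    Nat.cast_ne_zero.mpr (Nat.factorial_ne_zero m)
  have hdp : d ^ (n - 1) ≠ 0 := pow_ne_zero _ hd
  -- main direction : B * A = 1
  suffices hmain : B * A = 1 by exact ⟨mul_eq_one_comm.mpr hmain, hmain⟩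
  ext j k
  rw [Matrix.mul_apply, Matrix.one_apply]
  set D : ℝ := d ^ (n - 1) * (Nat.factorial (j : ℕ)) * (Nat.factorial (n - 1 - (j : ℕ))) with hD
  have hDne : D ≠ 0 := mul_ne_zero (mul_ne_zero hdp (hfac _)) (hfac _)
  have hentry : ∀ i : Fin n, B j i * A i k =
      ((-1 : ℝ) ^ (n - 1 + (j : ℕ)) * (a + (k : ℝ) * d) / ((a + (j : ℝ) * d) * D)) *
        ((-1 : ℝ) ^ (n - 1 - (i : ℕ)) * esymm (T.erase (a + (j : ℝ) * d)) (n - 1 - (i : ℕ)) *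
          (a + (k : ℝ) * d) ^ (i : ℕ)) := by
    intro i
    rw [hB, hA]
    have hni : n - ((i : ℕ) + 1) = n - 1 - (i : ℕ) := by omega
    rw [hni]
    have hsign : (-1 : ℝ) ^ (((j : ℕ) + 1) + ((i : ℕ) + 1)) =
        (-1 : ℝ) ^ (n - 1 + (j : ℕ)) * (-1 : ℝ) ^ (n - 1 - (i : ℕ)) := by
      rw [← pow_add, neg_one_pow_eq_pow_mod_two, neg_one_pow_eq_pow_mod_two (n := n - 1 + (j : ℕ) + (n - 1 - (i : ℕ)))]
      congr 1
      have := i.isLt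
      omega
    rw [hsign, pow_succ]
    field_simp
    ring
  rw [Finset.sum_congr rfl fun i _ => hentry i, ← Finset.mul_sum,
    Fin.sum_univ_eq_sum_range (fun i => (-1 : ℝ) ^ (n - 1 - i) *
      esymm (T.erase (a + (j : ℝ) * d)) (n - 1 - i) * (a + (k : ℝ) * d) ^ i) n]
  have hcard : (T.erase (a + (j : ℝ) * d)).card = n - 1 := by
    rw [Finset.card_erase_of_mem (hxT j), hTcard]
  have hP : ∑ i ∈ Finset.range n, (-1 : ℝ) ^ (n - 1 - i) *
      esymm (T.erase (a + (j : ℝ) * d)) (n - 1 - i) * (a + (k : ℝ) * d) ^ i =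
      ∏ c ∈ T.erase (a + (j : ℝ) * d), ((a + (k : ℝ) * d) - c) := by
    rw [prod_sub_esymm, hcard]
    rw [show n - 1 + 1 = n from by omega]
    rw [← Finset.sum_range_reflect (fun jj => (-1 : ℝ) ^ jj *
      esymm (T.erase (a + (j : ℝ) * d)) jj * (a + (k : ℝ) * d) ^ (n - 1 - jj)) n]
    refine Finset.sum_congr rfl fun i hi => ?_
    rw [Finset.mem_range] at hi
    rw [show n - 1 - (n - 1 - i) = i from by omega]
  rw [hP]
  by_cases hjk : j = k
  · subst hjk
    rw [if_pos rfl]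
    have him : T.erase (a + (j : ℝ) * d) =
        (Finset.univ.erase j).image (fun l : Fin n => a + (l : ℝ) * d) := by
      rw [hT', Finset.image_erase hinj]
    rw [him, Finset.prod_image (fun u _ v _ h => hinj h)]
    have hfactor : ∀ l ∈ Finset.univ.erase j,
        ((a + (j : ℝ) * d) - (a + (l : ℝ) * d)) = d * ((j : ℝ) - (l : ℝ)) := by
      intro l _; ring
    rw [Finset.prod_congr rfl hfactor, Finset.prod_mul_distrib, Finset.prod_const,
      Finset.card_erase_of_mem (Finset.mem_univ j), Finset.card_univ, Fintype.card_fin,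
      prod_cast_sub n j]
    have hsign2 : (-1 : ℝ) ^ (n - 1 + (j : ℕ)) * (-1 : ℝ) ^ (n - 1 - (j : ℕ)) = 1 := by
      rw [← pow_add]
      refine Even.neg_one_pow ⟨n - 1, ?_⟩
      have := j.isLt
      omega
    have hxj := hx0 j
    field_simp
    linear_combination (d ^ (n - 1) * (Nat.factorial (j : ℕ) : ℝ) *
      (Nat.factorial (n - 1 - (j : ℕ)) : ℝ)) * hsign2
  · rw [if_neg hjk]
    have hmem : a + (k : ℝ) * d ∈ T.erase (a + (j : ℝ) * d) := by
      refine Finset.mem_erase.mpr ⟨fun h => hjk ?_, hxT k⟩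
      exact (hinj h).symm
    rw [Finset.prod_eq_zero hmem (sub_self _), mul_zero]
end
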